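/- arXiv:1212.3506 — 6 statements merged into one kernel-verified Lean document; each statement's English description precedes it below -/
import Mathlib

section
/- Let p ∈ ℝ[t,x₁,…,xₙ] be homogeneous of degree d with p(1,0,…,0)=1, and suppose p is hyperbolic, i.e. for every u ∈ ℝⁿ the univariate polynomial t ↦ p(t,u) has all roots real. Then for any linear form ℓ ∈ ℝ[x₁,…,xₙ] and any s ≥ 0, the polynomial T_s^ℓ(p) = p + s·ℓ·(∂p/∂t) is also hyperbolic. -/
/-- Restriction of `p ∈ ℝ[t,x₁,…,xₙ]` to the line through `(t, u)`:
the univariate polynomial `t ↦ p(t,u)`. Variable `0` is `t`. -/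
noncomputable def univRestrict (n : ℕ) (p : MvPolynomial (Fin (n + 1)) ℝ)
    (u : Fin n → ℝ) : Polynomial ℝ :=
  MvPolynomial.aeval
    (fun i : Fin (n + 1) =>
      Fin.cases (Polynomial.X : Polynomial ℝ) (fun j => Polynomial.C (u j)) i) p

/-- All complex roots of a real univariate polynomial are real. -/
def RealRooted (q : Polynomial ℝ) : Prop :=
  ∀ z : ℂ, Polynomial.aeval z q = 0 → z.im = 0

/-- `p` is hyperbolic with respect to the direction `(1,0,…,0)`. -/
def Hyperbolic (n : ℕ) (p : MvPolynomial (Fin (n + 1)) ℝ) : Prop :=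
  ∀ u : Fin n → ℝ, RealRooted (univRestrict n p u)

open Polynomial

section Aux

/-- A product of linear factors does not vanish away from the roots. -/
lemma nuij_eval_prod_ne (m : Multiset ℂ) (z : ℂ) (h : ∀ r ∈ m, z ≠ r) :
    ((m.map fun r => X - C r).prod).eval z ≠ 0 := by
  rw [eval_multiset_prod, Multiset.map_map]
  rw [Ne, Multiset.prod_eq_zero_iff]
  intro h0
  obtain ⟨r, hr, hq0⟩ := Multiset.mem_map.mp h0
  simp at hq0
  exact h r hr (by linear_combination hq0)

/-- Logarithmic derivative of a product of linear factors. -/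
lemma nuij_logderiv (m : Multiset ℂ) (z : ℂ) (h : ∀ r ∈ m, z ≠ r) :
    ((m.map fun r => X - C r).prod).derivative.eval z
      = ((m.map fun r => X - C r).prod).eval z * (m.map fun r => (z - r)⁻¹).sum := by
  induction m using Multiset.induction_on with
  | empty => simp
  | cons a t ih =>
    have ha : z ≠ a := h a (Multiset.mem_cons_self a t)
    have ht : ∀ r ∈ t, z ≠ r := fun r hr => h r (Multiset.mem_cons_of_mem hr)
    have hz : (z - a) ≠ 0 := sub_ne_zero.mpr ha
    simp only [Multiset.map_cons, Multiset.prod_cons, Multiset.sum_cons, derivative_mul,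
      derivative_sub, derivative_X, derivative_C, sub_zero, one_mul, eval_add, eval_mul,
      eval_sub, eval_X, eval_C]
    rw [ih ht]
    field_simp

/-- Key analytic fact: if `q` is a nonzero real-rooted real polynomial,
then `q + λ·q'` is real-rooted for any real `λ`. -/
lemma nuij_realrooted_add (q : Polynomial ℝ) (hq : q ≠ 0) (hrr : RealRooted q) (lam : ℝ) :
    RealRooted (q + C lam * q.derivative) := by
  intro z hz
  by_contra him
  set Q : Polynomial ℂ := q.map (algebraMap ℝ ℂ) with hQdef
  have hQ0 : Q ≠ 0 := by
    simpa [hQdef, Polynomial.map_eq_zero] using hq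
  have hroots_real : ∀ r ∈ Q.roots, r.im = 0 := by
    intro r hr
    have : Q.eval r = 0 := (Polynomial.isRoot_of_mem_roots hr)
    exact hrr r (by rwa [Polynomial.aeval_def, ← Polynomial.eval_map])
  have hzr : ∀ r ∈ Q.roots, z ≠ r := by
    intro r hr heq
    exact him (heq ▸ hroots_real r hr)
  have heq : Q.eval z + (lam : ℂ) * Q.derivative.eval z = 0 := by
    have : (Polynomial.aeval z) (q + C lam * q.derivative) = 0 := hz
    rw [map_add, map_mul] at this
    simp only [Polynomial.aeval_def, ← Polynomial.eval_map, Polynomial.map_C,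
      Polynomial.derivative_map, Polynomial.eval_C] at this
    simpa [hQdef, Polynomial.derivative_map] using this
  have hfact : Q = C Q.leadingCoeff * (Q.roots.map fun r => X - C r).prod :=
    (IsAlgClosed.splits Q).eq_prod_roots
  set m := Q.roots with hm
  set P : Polynomial ℂ := (m.map fun r => X - C r).prod with hP
  have hL : Q.leadingCoeff ≠ 0 := leadingCoeff_ne_zero.mpr hQ0
  have hPz : P.eval z ≠ 0 := nuij_eval_prod_ne m z hzr
  have hQz : Q.eval z = Q.leadingCoeff * P.eval z := by
    conv_lhs => rw [hfact]
    rw [eval_mul, eval_C]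
  have hQz' : Q.derivative.eval z
      = Q.leadingCoeff * (P.eval z * (m.map fun r => (z - r)⁻¹).sum) := by
    conv_lhs => rw [hfact]
    rw [derivative_C_mul, eval_mul, eval_C, nuij_logderiv m z hzr]
  set S : ℂ := (m.map fun r => (z - r)⁻¹).sum with hS
  have key : (1 : ℂ) + lam * S = 0 := by
    have h2 : Q.leadingCoeff * P.eval z * (1 + lam * S) = 0 := by
      rw [hQz, hQz'] at heq; linear_combination heq
    rcases mul_eq_zero.mp h2 with h3 | h3
    · exact absurd h3 (mul_ne_zero hL hPz)
    · exact h3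
  have hSim : S.im = -z.im * (m.map fun r => (Complex.normSq (z - r))⁻¹).sum := by
    have h1 : S.im = ((m.map fun r => (z - r)⁻¹).map Complex.im).sum := by
      rw [hS, ← Complex.coe_imAddGroupHom, AddMonoidHom.map_multiset_sum]
    rw [h1, Multiset.map_map]
    have h2 : m.map (Complex.im ∘ fun r => (z - r)⁻¹)
        = m.map (fun r => -z.im * (Complex.normSq (z - r))⁻¹) := by
      apply Multiset.map_congr rfl
      intro r hr
      have hri : r.im = 0 := hroots_real r hr
      simp only [Function.comp_apply, Complex.inv_im, Complex.sub_im, hri, sub_zero]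
      field_simp
    rw [h2, Multiset.sum_map_mul_left]
  have hlam : lam ≠ 0 := by
    intro h0
    rw [h0] at key
    simp at key
  have hSim0 : S.im = 0 := by
    have : (lam : ℂ) * S = -1 := by linear_combination key
    have him' := congrArg Complex.im this
    simp [Complex.mul_im, Complex.ofReal_im, Complex.ofReal_re] at him'
    rcases him' with h | h
    · exact absurd h hlam
    · exact h
  have hmne : m ≠ 0 := by
    intro h0
    rw [h0] at hS
    simp [hS] at key
  have hpos : 0 < (m.map fun r => (Complex.normSq (z - r))⁻¹).sum := by
    obtain ⟨a, ha⟩ := Multiset.exists_mem_of_ne_zero hmne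
    have hcons : (a ::ₘ m.erase a) = m := Multiset.cons_erase ha
    rw [← hcons, Multiset.map_cons, Multiset.sum_cons]
    have h1 : (0:ℝ) < (Complex.normSq (z - a))⁻¹ := by
      have : z - a ≠ 0 := sub_ne_zero.mpr (hzr a ha)
      exact inv_pos.mpr (Complex.normSq_pos.mpr this)
    have h2 : (0:ℝ) ≤ ((m.erase a).map fun r => (Complex.normSq (z - r))⁻¹).sum := by
      apply Multiset.sum_nonneg
      intro x hx
      obtain ⟨r, hr, rfl⟩ := Multiset.mem_map.mp hx
      exact inv_nonneg.mpr (Complex.normSq_nonneg _)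
    linarith
  rw [hSim] at hSim0
  have : z.im = 0 := by
    rcases mul_eq_zero.mp hSim0 with h | h
    · linarith
    · exact absurd h (ne_of_gt hpos)
  exact him this

/-- Restriction commutes with `∂/∂t`. -/
lemma nuij_univRestrict_pderiv (n : ℕ) (p : MvPolynomial (Fin (n + 1)) ℝ) (u : Fin n → ℝ) :
    univRestrict n (MvPolynomial.pderiv (0 : Fin (n + 1)) p) u
      = (univRestrict n p u).derivative := by
  induction p using MvPolynomial.induction_on with
  | C a => simp [univRestrict]
  | add f g hf hg => simp only [univRestrict, map_add, derivative_add] at *; rw [hf, hg]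
  | mul_X f i hf =>
    have e : ∀ g : MvPolynomial (Fin (n+1)) ℝ, (MvPolynomial.aeval fun i : Fin (n+1) =>
        Fin.cases (Polynomial.X : Polynomial ℝ) (fun j => Polynomial.C (u j)) i) g
        = univRestrict n g u := fun _ => rfl
    rw [MvPolynomial.pderiv_mul]
    cases i using Fin.cases with
    | zero =>
      simp only [MvPolynomial.pderiv_X_self]
      simp only [univRestrict, map_add, map_mul, map_one, MvPolynomial.aeval_X,
        Fin.cases_zero, mul_one]
      rw [derivative_mul, derivative_X]
      rw [univRestrict] at hf
      rw [hf, e f]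
      ring
    | succ j =>
      have h0 : MvPolynomial.pderiv (0 : Fin (n+1)) (MvPolynomial.X j.succ :
          MvPolynomial (Fin (n+1)) ℝ) = 0 := by
        rw [MvPolynomial.pderiv_X]
        simp [Fin.succ_ne_zero]
      rw [h0, mul_zero, add_zero]
      simp only [univRestrict, map_mul, MvPolynomial.aeval_X, Fin.cases_succ]
      rw [derivative_mul, derivative_C, mul_zero, add_zero]
      rw [univRestrict] at hf
      rw [hf, e f]

/-- A monomial of `p` of degree `d` with full `t`-degree is `t^d`. -/
lemma nuij_support_top (n d : ℕ) (p : MvPolynomial (Fin (n + 1)) ℝ) (hhom : p.IsHomogeneous d)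
    (m : Fin (n + 1) →₀ ℕ) (hm : m ∈ p.support) (h0 : m 0 = d) :
    m = Finsupp.single 0 d := by
  have hdeg : m.degree = d := by
    rw [Finsupp.degree_eq_weight_one]
    exact hhom (MvPolynomial.mem_support_iff.mp hm)
  have hsum : ∑ i : Fin (n + 1), m i = d := by
    rw [← hdeg, Finsupp.degree]
    exact (Finset.sum_subset (Finset.subset_univ _) (by
      intro x _ hx
      exact Finsupp.notMem_support_iff.mp hx)).symm
  rw [Fin.sum_univ_succ, h0] at hsum
  have hz : ∀ j : Fin n, m j.succ = 0 := by
    intro j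
    have : ∑ j : Fin n, m j.succ = 0 := by omega
    exact Finset.sum_eq_zero_iff.mp this j (Finset.mem_univ j)
  ext i
  cases i using Fin.cases with
  | zero => simp [h0]
  | succ j => simp [hz j, Finsupp.single_apply_eq_zero, Fin.succ_ne_zero j |>.symm]

/-- The top `t`-coefficient of the restriction. -/
lemma nuij_univRestrict_coeff_d (n d : ℕ) (p : MvPolynomial (Fin (n + 1)) ℝ)
    (hhom : p.IsHomogeneous d) (u : Fin n → ℝ) :
    (univRestrict n p u).coeff d = MvPolynomial.coeff (Finsupp.single 0 d) p := by
  rw [univRestrict, MvPolynomial.aeval_def, MvPolynomial.eval₂_eq']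
  rw [Polynomial.finset_sum_coeff]
  rw [Finset.sum_eq_single (Finsupp.single 0 d)]
  · by_cases hmem : Finsupp.single (0 : Fin (n+1)) d ∈ p.support
    · rw [Fin.prod_univ_succ]
      simp [Finsupp.single_apply, Fin.succ_ne_zero, eq_comm, coeff_C_mul, coeff_X_pow,
        Polynomial.algebraMap_eq]
    · rw [MvPolynomial.notMem_support_iff.mp hmem]
      simp [Polynomial.algebraMap_eq]
  · intro m hm hne
    have h0 : m 0 ≠ d := fun h => hne (nuij_support_top n d p hhom m hm h)
    rw [Fin.prod_univ_succ]
    simp only [Fin.cases_zero, Fin.cases_succ]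
    rw [Polynomial.algebraMap_eq]
    have : (∏ j : Fin n, (C (u j)) ^ m j.succ) = C (∏ j : Fin n, (u j) ^ m j.succ) := by
      simp [map_prod]
    rw [this, coeff_C_mul, mul_comm (X ^ m 0) _, coeff_C_mul, coeff_X_pow]
    simp [Ne.symm h0, h0]
  · intro h
    rw [MvPolynomial.notMem_support_iff.mp h]
    simp [Polynomial.algebraMap_eq]

/-- The normalization `p(1,0,…,0)` equals the coefficient of `t^d`. -/
lemma nuij_eval_indicator (n d : ℕ) (p : MvPolynomial (Fin (n + 1)) ℝ)
    (hhom : p.IsHomogeneous d) :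
    MvPolynomial.eval (fun i : Fin (n + 1) => if i = 0 then (1 : ℝ) else 0) p
      = MvPolynomial.coeff (Finsupp.single 0 d) p := by
  rw [MvPolynomial.eval_eq']
  rw [Finset.sum_eq_single (Finsupp.single 0 d)]
  · by_cases hmem : Finsupp.single (0 : Fin (n+1)) d ∈ p.support
    · rw [Fin.prod_univ_succ]
      simp [Finsupp.single_apply, Fin.succ_ne_zero, eq_comm]
    · rw [MvPolynomial.notMem_support_iff.mp hmem]
      simp
  · intro m hm hne
    have : ∃ j : Fin n, m j.succ ≠ 0 := by
      by_contra hall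
      push_neg at hall
      apply hne
      apply nuij_support_top n d p hhom m hm
      have hdeg : (Finsupp.weight 1) m = d := hhom (MvPolynomial.mem_support_iff.mp hm)
      have hsum : ∑ i : Fin (n + 1), m i = d := by
        rw [← hdeg]
        change _ = Finsupp.weight (fun _ => 1) m
        rw [← Finsupp.degree_eq_weight_one, Finsupp.degree]
        exact (Finset.sum_subset (Finset.subset_univ _) (by
          intro x _ hx
          exact Finsupp.notMem_support_iff.mp hx)).symm
      rw [Fin.sum_univ_succ] at hsum
      simp [hall] at hsum
      exact hsum
    obtain ⟨j, hj⟩ := this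
    rw [Fin.prod_univ_succ]
    apply mul_eq_zero_of_right
    apply mul_eq_zero_of_right
    apply Finset.prod_eq_zero (Finset.mem_univ j)
    simp [Fin.succ_ne_zero, eq_comm, zero_pow hj]
  · intro h
    rw [MvPolynomial.notMem_support_iff.mp h]
    simp

end Aux

/-- Nuij's operator `T_s^ℓ(p) = p + s·ℓ·∂p/∂t` preserves hyperbolicity
for `s ≥ 0` and any linear form `ℓ` in the variables `x₁,…,xₙ`. -/
theorem Tsl_preserves_hyperbolicity (n d : ℕ) (hn : 1 ≤ n) (hd : 1 ≤ d)
    (p : MvPolynomial (Fin (n + 1)) ℝ)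
    (hhom : p.IsHomogeneous d)
    (hmonic : MvPolynomial.eval (fun i : Fin (n + 1) => if i = 0 then (1 : ℝ) else 0) p = 1)
    (hhyp : Hyperbolic n p)
    (c : Fin n → ℝ) (s : ℝ) (hs : 0 ≤ s) :
    Hyperbolic n
      (p + MvPolynomial.C s *
        (∑ i : Fin n, MvPolynomial.C (c i) * MvPolynomial.X i.succ) *
        MvPolynomial.pderiv (0 : Fin (n + 1)) p) := by
  intro u
  set q : Polynomial ℝ := univRestrict n p u with hq
  set lam : ℝ := s * ∑ i : Fin n, c i * u i with hlam
  have hrestrict : univRestrict n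
      (p + MvPolynomial.C s *
        (∑ i : Fin n, MvPolynomial.C (c i) * MvPolynomial.X i.succ) *
        MvPolynomial.pderiv (0 : Fin (n + 1)) p) u
      = q + C lam * q.derivative := by
    simp only [univRestrict, map_add, map_mul, map_sum, MvPolynomial.aeval_C,
      MvPolynomial.aeval_X, Fin.cases_succ]
    have hpd : (MvPolynomial.aeval fun i : Fin (n+1) =>
        Fin.cases (Polynomial.X : Polynomial ℝ) (fun j => Polynomial.C (u j)) i)
        (MvPolynomial.pderiv (0 : Fin (n + 1)) p) = q.derivative :=
      nuij_univRestrict_pderiv n p u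
    rw [hpd]
    have e : (MvPolynomial.aeval fun i : Fin (n+1) =>
        Fin.cases (Polynomial.X : Polynomial ℝ) (fun j => Polynomial.C (u j)) i) p = q := rfl
    rw [e]
    have : (∑ i : Fin n, (algebraMap ℝ (Polynomial ℝ)) (c i) * C (u i)) = C (∑ i, c i * u i) := by
      rw [map_sum]
      congr 1
      ext i
      rw [Polynomial.algebraMap_eq, ← Polynomial.C_mul]
    rw [this, Polynomial.algebraMap_eq, hlam, ← Polynomial.C_mul]
  rw [hrestrict]
  have hq0 : q ≠ 0 := by
    have hc : q.coeff d = 1 := by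
      rw [hq, nuij_univRestrict_coeff_d n d p hhom u, ← nuij_eval_indicator n d p hhom, hmonic]
    intro h
    rw [h] at hc
    simp at hc
  exact nuij_realrooted_add q hq0 (hhyp u) lam
end

section
/- Let S be a diagonal sign matrix (diagonal entries ±1) with S ≠ ±I_d, let D be diagonal, and let R be symmetric commuting with S. Then the polynomial det(t·I_d + x·D + y·R) factors as a product of two homogeneous polynomials of positive degree; in particular it is reducible. -/
open MvPolynomial

lemma aux_det_homog {n : Type*} [DecidableEq n] [Fintype n]
    (M : Matrix n n (MvPolynomial (Fin 3) ℂ))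
    (h : ∀ i j, (M i j).IsHomogeneous 1) :
    M.det.IsHomogeneous (Fintype.card n) := by
  rw [Matrix.det_apply]
  apply MvPolynomial.IsHomogeneous.sum
  intro τ _
  have hp : (∏ i, M (τ i) i).IsHomogeneous (Fintype.card n) := by
    have := MvPolynomial.IsHomogeneous.prod Finset.univ (fun i => M (τ i) i)
      (fun _ => 1) (fun i _ => h _ _)
    simpa using this
  rcases Int.units_eq_one_or (Equiv.Perm.sign τ) with hs | hs <;>
    simp [hs, hp, hp.neg]

/-- if a diagonal sign matrix `S ≠ ±I` commutes with the symmetric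
matrix `R`, and `D` is diagonal, then `det(t·I + x·D + y·R)` factors into two
homogeneous polynomials of positive degree; in particular it is reducible. -/
theorem det_pencil_reducible (d : ℕ) (hd : 2 ≤ d)
    (σ : Fin d → ℂ) (hσ : ∀ i, σ i = 1 ∨ σ i = -1)
    (hS1 : Matrix.diagonal σ ≠ (1 : Matrix (Fin d) (Fin d) ℂ))
    (hS2 : Matrix.diagonal σ ≠ (-1 : Matrix (Fin d) (Fin d) ℂ))
    (D R : Matrix (Fin d) (Fin d) ℂ) (hD : D.IsDiag) (hR : R.IsSymm)
    (hcomm : Matrix.diagonal σ * R = R * Matrix.diagonal σ) :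
    ∃ (f g : MvPolynomial (Fin 3) ℂ) (a b : ℕ), 0 < a ∧ 0 < b ∧
      f.IsHomogeneous a ∧ g.IsHomogeneous b ∧
      Matrix.det
        ((X 0 : MvPolynomial (Fin 3) ℂ) • (1 : Matrix (Fin d) (Fin d) (MvPolynomial (Fin 3) ℂ)) +
          (X 1 : MvPolynomial (Fin 3) ℂ) • D.map C +
          (X 2 : MvPolynomial (Fin 3) ℂ) • R.map C) = f * g := by
  classical
  set M : Matrix (Fin d) (Fin d) (MvPolynomial (Fin 3) ℂ) :=
    (X 0 : MvPolynomial (Fin 3) ℂ) • (1 : Matrix (Fin d) (Fin d) (MvPolynomial (Fin 3) ℂ)) +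
      (X 1 : MvPolynomial (Fin 3) ℂ) • D.map C +
      (X 2 : MvPolynomial (Fin 3) ℂ) • R.map C with hM
  set p : Fin d → Prop := fun i => σ i = 1 with hp
  -- R vanishes off the blocks
  have hRzero : ∀ i j, σ i ≠ σ j → R i j = 0 := by
    intro i j hij
    have := congrFun (congrFun hcomm i) j
    simp [Matrix.mul_apply, Matrix.diagonal, Finset.sum_ite_eq, Finset.sum_ite_eq'] at this
    have h2 : (σ i - σ j) * R i j = 0 := by ring_nf; linear_combination this
    rcases mul_eq_zero.mp h2 with h | h
    · exact absurd (sub_eq_zero.mp h) hij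
    · exact h
  have hMzero : ∀ i j, σ i ≠ σ j → M i j = 0 := by
    intro i j hij
    have hne : i ≠ j := fun h => hij (h ▸ rfl)
    simp [hM, Matrix.one_apply_ne hne, hD hne, hRzero i j hij, Matrix.map_apply]
  -- entries homogeneous of degree 1
  have hent : ∀ i j, (M i j).IsHomogeneous 1 := by
    intro i j
    have h1 : ((X 0 : MvPolynomial (Fin 3) ℂ) *
        (1 : Matrix (Fin d) (Fin d) (MvPolynomial (Fin 3) ℂ)) i j).IsHomogeneous 1 := by
      by_cases h : i = j
      · subst h; rw [Matrix.one_apply_eq, mul_one]; exact isHomogeneous_X _ _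
      · rw [Matrix.one_apply_ne h, mul_zero]; exact isHomogeneous_zero _ _ _
    have h2 : ((X 1 : MvPolynomial (Fin 3) ℂ) * C (D i j)).IsHomogeneous 1 := by
      simpa using (isHomogeneous_X ℂ (1 : Fin 3)).mul (isHomogeneous_C (Fin 3) (D i j))
    have h3 : ((X 2 : MvPolynomial (Fin 3) ℂ) * C (R i j)).IsHomogeneous 1 := by
      simpa using (isHomogeneous_X ℂ (2 : Fin 3)).mul (isHomogeneous_C (Fin 3) (R i j))
    have : M i j = (X 0 : MvPolynomial (Fin 3) ℂ) *
        (1 : Matrix (Fin d) (Fin d) (MvPolynomial (Fin 3) ℂ)) i j +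
        (X 1 : MvPolynomial (Fin 3) ℂ) * C (D i j) +
        (X 2 : MvPolynomial (Fin 3) ℂ) * C (R i j) := by
      simp [hM, Matrix.map_apply, smul_eq_mul]
    rw [this]
    exact (h1.add h2).add h3
  -- block decomposition
  let A : Matrix {i // p i} {i // p i} (MvPolynomial (Fin 3) ℂ) := fun i j => M i j
  let B : Matrix {i // ¬ p i} {i // ¬ p i} (MvPolynomial (Fin 3) ℂ) := fun i j => M i j
  have hsub : M.submatrix (Equiv.sumCompl p) (Equiv.sumCompl p) = Matrix.fromBlocks A 0 0 B := by
    refine Matrix.ext fun i j => ?_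
    rcases i with i | i <;> rcases j with j | j <;>
      simp [Matrix.submatrix, Matrix.fromBlocks, A, B, Equiv.sumCompl]
    · -- i satisfies p, j doesn't
      apply hMzero
      rcases hσ j.1 with h | h
      · exact absurd h j.2
      · rw [i.2, h]; norm_num
    · apply hMzero
      rcases hσ i.1 with h | h
      · exact absurd h i.2
      · rw [j.2, h]; norm_num
  have hdet : M.det = A.det * B.det := by
    rw [← Matrix.det_submatrix_equiv_self (Equiv.sumCompl p) M, hsub,
      Matrix.det_fromBlocks_zero₂₁]
  -- nonemptiness of both blocks
  have hne1 : Nonempty {i // p i} := by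
    by_contra h
    apply hS2
    ext i j
    by_cases hij : i = j
    · subst hij
      rcases hσ i with h1 | h1
      · exact absurd ⟨⟨i, h1⟩⟩ h
      · simp [Matrix.diagonal, h1]
    · simp [Matrix.diagonal_apply_ne _ hij, Matrix.one_apply_ne hij]
  have hne2 : Nonempty {i // ¬ p i} := by
    by_contra h
    apply hS1
    ext i j
    by_cases hij : i = j
    · subst hij
      by_cases h1 : p i
      · simp only [hp] at h1
        simp [Matrix.diagonal_apply_eq, h1]
      · exact absurd ⟨⟨i, h1⟩⟩ h
    · simp [Matrix.diagonal_apply_ne _ hij, Matrix.one_apply_ne hij]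
  refine ⟨A.det, B.det, Fintype.card {i // p i}, Fintype.card {i // ¬ p i},
    Fintype.card_pos_iff.mpr hne1, Fintype.card_pos_iff.mpr hne2,
    aux_det_homog A (fun i j => hent i j), aux_det_homog B (fun i j => hent i j), hdet⟩
end

section
/- Let D = Diag(d₁,d₂) and R = [[r₁₁,r₁₂],[r₁₂,r₂₂]] be real 2×2 matrices with D diagonal and R symmetric. Write the ternary quadric N_s(Φ(D,R)) obtained from det(tI₂+xD+yR) by the Nuij operator. Then 4 times the discriminant of this quadric equals 2s²(s-1)²(d₁-d₂)² + 2s²(s-1)²(r₁₁-r₂₂)² + s⁴r₁₂²(d₁-d₂)² + 8r₁₂²s²(1-s)² + 16(s-1)⁴; consequently, for s ∈ [0,1) the discriminant is strictly positive, so the quadric N_s(Φ(D,R)) is irreducible (defines a smooth conic). -/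
open MvPolynomial

/- Variables in `MvPolynomial (Fin 3) ℝ`: `X 0 = t`, `X 1 = x`, `X 2 = y`. -/

/-- Nuij's basic operator `T_s^ℓ(p) = p + s·ℓ·∂p/∂t` with `ℓ = X i`. -/
noncomputable def NuijT (s : ℝ) (i : Fin 3) (p : MvPolynomial (Fin 3) ℝ) :
    MvPolynomial (Fin 3) ℝ :=
  p + C s * X i * pderiv 0 p

/-- The scaling operator `G_s(p)(t,x,y) = p(t,sx,sy)`. -/
noncomputable def Gop (s : ℝ) (p : MvPolynomial (Fin 3) ℝ) : MvPolynomial (Fin 3) ℝ :=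
  aeval (fun i : Fin 3 => if i = 0 then X 0 else C s * X i) p

/-- Nuij's operator for degree 2: `N_s = F_{1-s} ∘ G_s` with `F_s = (T_s^x)²(T_s^y)²`. -/
noncomputable def Nop (s : ℝ) (p : MvPolynomial (Fin 3) ℝ) : MvPolynomial (Fin 3) ℝ :=
  NuijT (1 - s) 1 (NuijT (1 - s) 1 (NuijT (1 - s) 2 (NuijT (1 - s) 2 (Gop s p))))

/-- The coefficients `A,B,C,D,E,F` of a ternary quadric
`q = A·x² + B·xy + C·y² + D·xt + E·yt + F·t²`. -/
noncomputable def coeffA (q : MvPolynomial (Fin 3) ℝ) : ℝ := q.coeff (Finsupp.single 1 2)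
noncomputable def coeffB (q : MvPolynomial (Fin 3) ℝ) : ℝ :=
  q.coeff (Finsupp.single 1 1 + Finsupp.single 2 1)
noncomputable def coeffC (q : MvPolynomial (Fin 3) ℝ) : ℝ := q.coeff (Finsupp.single 2 2)
noncomputable def coeffD (q : MvPolynomial (Fin 3) ℝ) : ℝ :=
  q.coeff (Finsupp.single 1 1 + Finsupp.single 0 1)
noncomputable def coeffE (q : MvPolynomial (Fin 3) ℝ) : ℝ :=
  q.coeff (Finsupp.single 2 1 + Finsupp.single 0 1)
noncomputable def coeffF (q : MvPolynomial (Fin 3) ℝ) : ℝ := q.coeff (Finsupp.single 0 2)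

/-- The discriminant of a ternary quadric. -/
noncomputable def quadricDisc (q : MvPolynomial (Fin 3) ℝ) : ℝ :=
  Matrix.det
    !![coeffA q, coeffB q / 2, coeffD q / 2;
       coeffB q / 2, coeffC q, coeffE q / 2;
       coeffD q / 2, coeffE q / 2, coeffF q]

/-! ### Auxiliary machinery -/

/-- A general ternary quadric with prescribed coefficients. -/
noncomputable def Qf (a b c d e f : ℝ) : MvPolynomial (Fin 3) ℝ :=
  C a * X 1 ^ 2 + C b * (X 1 * X 2) + C c * X 2 ^ 2 + C d * (X 1 * X 0) +
    C e * (X 2 * X 0) + C f * X 0 ^ 2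

lemma pderiv0_Qf (a b c d e f : ℝ) :
    pderiv 0 (Qf a b c d e f) = C d * X 1 + C e * X 2 + C (2*f) * X 0 := by
  simp [Qf, pderiv_mul, pderiv_pow, pderiv_X_self, pderiv_C,
    pderiv_X_of_ne (by decide : (1:Fin 3) ≠ 0), pderiv_X_of_ne (by decide : (2:Fin 3) ≠ 0),
    map_mul, map_ofNat]
  ring

lemma nuijT1_Qf (k a b c d e f : ℝ) :
    NuijT k 1 (Qf a b c d e f) = Qf (a + k*d) (b + k*e) c (d + 2*k*f) e f := by
  rw [NuijT, pderiv0_Qf]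
  simp only [Qf, map_add, map_mul, map_ofNat]
  ring

lemma nuijT2_Qf (k a b c d e f : ℝ) :
    NuijT k 2 (Qf a b c d e f) = Qf a (b + k*d) (c + k*e) d (e + 2*k*f) f := by
  rw [NuijT, pderiv0_Qf]
  simp only [Qf, map_add, map_mul, map_ofNat]
  ring

lemma gop_det (s d1 d2 r11 r12 r22 : ℝ) :
    Gop s
        (Matrix.det
          (!![X 0 + C d1 * X 1 + C r11 * X 2, C r12 * X 2;
              C r12 * X 2, X 0 + C d2 * X 1 + C r22 * X 2] :
            Matrix (Fin 2) (Fin 2) (MvPolynomial (Fin 3) ℝ))) =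
      Qf (s^2*(d1*d2)) (s^2*(d1*r22+d2*r11)) (s^2*(r11*r22-r12^2))
         (s*(d1+d2)) (s*(r11+r22)) 1 := by
  simp only [Gop, Matrix.det_fin_two_of, map_add, map_mul, map_sub, aeval_X, aeval_C,
    algebraMap_eq, Qf, map_pow, map_one,
    if_neg (show ¬((2:Fin 3)=0) by decide), if_neg (show ¬((1:Fin 3)=0) by decide),
    if_pos (rfl : (0:Fin 3)=0), if_true]
  ring

lemma Qf_congr {a b c d e f a' b' c' d' e' f' : ℝ}
    (ha : a = a') (hb : b = b') (hc : c = c') (hd : d = d') (he : e = e') (hf : f = f') :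
    Qf a b c d e f = Qf a' b' c' d' e' f' := by
  rw [ha, hb, hc, hd, he, hf]

lemma nop_eq (s d1 d2 r11 r12 r22 : ℝ) :
    Nop s
        (Matrix.det
          (!![X 0 + C d1 * X 1 + C r11 * X 2, C r12 * X 2;
              C r12 * X 2, X 0 + C d2 * X 1 + C r22 * X 2] :
            Matrix (Fin 2) (Fin 2) (MvPolynomial (Fin 3) ℝ))) =
      Qf (2 - 4*s + 2*s*d2 + 2*s*d1 + 2*s^2 - 2*s^2*d2 - 2*s^2*d1 + s^2*(d1*d2))
         (8 - 16*s + 2*s*r22 + 2*s*r11 + 2*s*d2 + 2*s*d1 + 8*s^2 - 2*s^2*r22 - 2*s^2*r11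
            - 2*s^2*d2 + s^2*(d2*r11) - 2*s^2*d1 + s^2*(d1*r22))
         (2 - 4*s + 2*s*r22 + 2*s*r11 + 2*s^2 - 2*s^2*r22 - s^2*r12^2 - 2*s^2*r11 + s^2*(r11*r22))
         (4 - 4*s + s*d2 + s*d1)
         (4 - 4*s + s*r22 + s*r11)
         1 := by
  rw [Nop, gop_det, nuijT2_Qf, nuijT2_Qf, nuijT1_Qf, nuijT1_Qf]
  exact Qf_congr (by ring) (by ring) (by ring) (by ring) (by ring) (by ring)

lemma coeff_Qf (m : Fin 3 →₀ ℕ) (a b c d e f : ℝ) :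
    (Qf a b c d e f).coeff m =
      (if m = Finsupp.single 1 2 then a else 0) +
      (if m = Finsupp.single 1 1 + Finsupp.single 2 1 then b else 0) +
      (if m = Finsupp.single 2 2 then c else 0) +
      (if m = Finsupp.single 1 1 + Finsupp.single 0 1 then d else 0) +
      (if m = Finsupp.single 2 1 + Finsupp.single 0 1 then e else 0) +
      (if m = Finsupp.single 0 2 then f else 0) := by
  have h2 : ∀ i : Fin 3, (X i ^ 2 : MvPolynomial (Fin 3) ℝ) = monomial (Finsupp.single i 2) 1 := by
    intro i; rw [X_pow_eq_monomial]
  have hm : ∀ i j : Fin 3, (X i * X j : MvPolynomial (Fin 3) ℝ) =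
      monomial (Finsupp.single i 1 + Finsupp.single j 1) 1 := by
    intro i j; rw [X, X, monomial_mul, one_mul]
  simp only [Qf, h2, hm, coeff_add, coeff_C_mul, coeff_monomial, mul_ite, mul_one, mul_zero]
  simp [eq_comm]

lemma coeffA_Qf (a b c d e f : ℝ) : coeffA (Qf a b c d e f) = a := by
  rw [coeffA, coeff_Qf]
  simp +decide [Finsupp.ext_iff, Fin.forall_fin_succ, Finsupp.single_apply, Finsupp.add_apply]

lemma coeffB_Qf (a b c d e f : ℝ) : coeffB (Qf a b c d e f) = b := by
  rw [coeffB, coeff_Qf]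
  simp +decide [Finsupp.ext_iff, Fin.forall_fin_succ, Finsupp.single_apply, Finsupp.add_apply]

lemma coeffC_Qf (a b c d e f : ℝ) : coeffC (Qf a b c d e f) = c := by
  rw [coeffC, coeff_Qf]
  simp +decide [Finsupp.ext_iff, Fin.forall_fin_succ, Finsupp.single_apply, Finsupp.add_apply]

lemma coeffD_Qf (a b c d e f : ℝ) : coeffD (Qf a b c d e f) = d := by
  rw [coeffD, coeff_Qf]
  simp +decide [Finsupp.ext_iff, Fin.forall_fin_succ, Finsupp.single_apply, Finsupp.add_apply]

lemma coeffE_Qf (a b c d e f : ℝ) : coeffE (Qf a b c d e f) = e := by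
  rw [coeffE, coeff_Qf]
  simp +decide [Finsupp.ext_iff, Fin.forall_fin_succ, Finsupp.single_apply, Finsupp.add_apply]

lemma coeffF_Qf (a b c d e f : ℝ) : coeffF (Qf a b c d e f) = f := by
  rw [coeffF, coeff_Qf]
  simp +decide [Finsupp.ext_iff, Fin.forall_fin_succ, Finsupp.single_apply, Finsupp.add_apply]

lemma disc_Qf (a b c d e f : ℝ) :
    quadricDisc (Qf a b c d e f) =
      a*c*f - a*(e/2)^2 - (b/2)^2*f + 2*(b/2)*(d/2)*(e/2) - c*(d/2)^2 := by
  rw [quadricDisc, coeffA_Qf, coeffB_Qf, coeffC_Qf, coeffD_Qf, coeffE_Qf, coeffF_Qf,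
    Matrix.det_fin_three]
  simp [Matrix.cons_val_zero, Matrix.cons_val_one]
  ring

abbrev R2 := MvPolynomial (Fin 2) ℝ

lemma fse_C (r : ℝ) : finSuccEquiv ℝ 2 (C r) = Polynomial.C (C r) := by
  rw [finSuccEquiv_apply, eval₂Hom_C]; rfl

set_option maxRecDepth 4000 in
lemma fse_Qf (a b c d e f : ℝ) :
    finSuccEquiv ℝ 2 (Qf a b c d e f) =
      Polynomial.C (C f) * Polynomial.X ^ 2 +
        Polynomial.C (C d * X 0 + C e * X 1) * Polynomial.X +
        Polynomial.C (C a * X 0 ^ 2 + C b * (X 0 * X 1) + C c * X 1 ^ 2) := by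
  have h1 : finSuccEquiv ℝ 2 (X 1) = Polynomial.C (X 0) :=
    (by rfl : finSuccEquiv ℝ 2 (X 1) = finSuccEquiv ℝ 2 (X (Fin.succ 0))).trans finSuccEquiv_X_succ
  have h2 : finSuccEquiv ℝ 2 (X 2) = Polynomial.C (X 1) :=
    (by rfl : finSuccEquiv ℝ 2 (X 2) = finSuccEquiv ℝ 2 (X (Fin.succ 1))).trans finSuccEquiv_X_succ
  simp only [Qf, map_add, map_mul, map_pow, h1, h2, finSuccEquiv_X_zero,
    fse_C, Polynomial.C_add, Polynomial.C_mul, Polynomial.C_pow]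
  ring

lemma pcoeff2 {R : Type*} [CommSemiring R] (A B C' : R) :
    (Polynomial.C A * Polynomial.X ^ 2 + Polynomial.C B * Polynomial.X +
      Polynomial.C C').coeff 2 = A := by
  simp [Polynomial.coeff_C]

lemma pcoeff1 {R : Type*} [CommSemiring R] (A B C' : R) :
    (Polynomial.C A * Polynomial.X ^ 2 + Polynomial.C B * Polynomial.X +
      Polynomial.C C').coeff 1 = B := by
  simp [Polynomial.coeff_C]

lemma pcoeff0 {R : Type*} [CommSemiring R] (A B C' : R) :
    (Polynomial.C A * Polynomial.X ^ 2 + Polynomial.C B * Polynomial.X +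
      Polynomial.C C').coeff 0 = C' := by
  simp [Polynomial.coeff_C]

lemma key_irred (a b c d e : ℝ)
    (h : (2*d*e-4*b)^2 - 4*(d^2-4*a)*(e^2-4*c) < 0) :
    Irreducible (Polynomial.X ^ 2 +
      Polynomial.C (C d * X 0 + C e * X 1 : R2) * Polynomial.X +
      Polynomial.C (C a * X 0 ^ 2 + C b * (X 0 * X 1) + C c * X 1 ^ 2 : R2)) := by
  set L : R2 := C d * X 0 + C e * X 1 with hLdef
  set Q0 : R2 := C a * X 0 ^ 2 + C b * (X 0 * X 1) + C c * X 1 ^ 2 with hQdef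
  set P : Polynomial R2 := Polynomial.X ^ 2 + Polynomial.C L * Polynomial.X + Polynomial.C Q0
    with hPdef
  have hP1 : P = Polynomial.C (1:R2) * Polynomial.X ^ 2 + Polynomial.C L * Polynomial.X +
      Polynomial.C Q0 := by rw [hPdef, map_one, one_mul]
  have hm : P.Monic := by
    rw [hPdef, add_assoc]
    apply Polynomial.monic_X_pow_add
    exact Polynomial.degree_linear_le.trans_lt (by norm_num)
  have hdeg : P.natDegree = 2 := by
    rw [hPdef]
    compute_degree!
  constructor
  · intro hu
    have := Polynomial.natDegree_eq_zero_of_isUnit hu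
    omega
  · intro u v huv
    by_contra hc
    push_neg at hc
    obtain ⟨hu, hv⟩ := hc
    have hu0 : u ≠ 0 := by rintro rfl; rw [zero_mul] at huv; rw [huv] at hdeg; simp at hdeg
    have hv0 : v ≠ 0 := by rintro rfl; rw [mul_zero] at huv; rw [huv] at hdeg; simp at hdeg
    have hdm : u.natDegree + v.natDegree = 2 := by
      rw [← Polynomial.natDegree_mul hu0 hv0, ← huv, hdeg]
    have hlc : u.leadingCoeff * v.leadingCoeff = 1 := by
      rw [← Polynomial.leadingCoeff_mul, ← huv, hm.leadingCoeff]
    have hun : u.natDegree ≠ 0 := by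
      intro h0
      apply hu
      have hlu : IsUnit u.leadingCoeff := IsUnit.of_mul_eq_one _ hlc
      rw [Polynomial.eq_C_of_natDegree_eq_zero h0]
      rw [Polynomial.leadingCoeff, h0] at hlu
      exact Polynomial.isUnit_C.mpr hlu
    have hvn : v.natDegree ≠ 0 := by
      intro h0
      apply hv
      have hlv : IsUnit v.leadingCoeff :=
        IsUnit.of_mul_eq_one _ ((mul_comm u.leadingCoeff _) ▸ hlc)
      rw [Polynomial.eq_C_of_natDegree_eq_zero h0]
      rw [Polynomial.leadingCoeff, h0] at hlv
      exact Polynomial.isUnit_C.mpr hlv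
    set u1 := u.coeff 1 with hu1d
    set u0 := u.coeff 0 with hu0d
    set v1 := v.coeff 1 with hv1d
    set v0 := v.coeff 0 with hv0d
    rw [Polynomial.eq_X_add_C_of_natDegree_le_one (by omega : u.natDegree ≤ 1),
        Polynomial.eq_X_add_C_of_natDegree_le_one (by omega : v.natDegree ≤ 1)] at huv
    have hexp : (Polynomial.C u1 * Polynomial.X + Polynomial.C u0) *
        (Polynomial.C v1 * Polynomial.X + Polynomial.C v0) =
        Polynomial.C (u1*v1) * Polynomial.X ^ 2 +
          Polynomial.C (u1*v0 + u0*v1) * Polynomial.X + Polynomial.C (u0*v0) := by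
      simp only [Polynomial.C_mul, Polynomial.C_add]
      ring
    rw [hexp, hP1] at huv
    have c2 : (1 : R2) = u1 * v1 := by
      have := congrArg (fun p => Polynomial.coeff p 2) huv
      simpa only [pcoeff2] using this
    have c1 : L = u1 * v0 + u0 * v1 := by
      have := congrArg (fun p => Polynomial.coeff p 1) huv
      simpa only [pcoeff1] using this
    have c0 : Q0 = u0 * v0 := by
      have := congrArg (fun p => Polynomial.coeff p 0) huv
      simpa only [pcoeff0] using this
    set ψ : R2 →ₐ[ℝ] Polynomial ℝ := aeval ![Polynomial.X, 1] with hψ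
    set w : Polynomial ℝ := ψ (u1 * v0) - ψ (u0 * v1) with hwdef
    have hψL : ψ L = Polynomial.C d * Polynomial.X + Polynomial.C e := by
      rw [hLdef]
      simp [hψ, MvPolynomial.algebraMap_eq, Polynomial.algebraMap_eq]
    have hψQ : ψ Q0 = Polynomial.C a * Polynomial.X ^ 2 + Polynomial.C b * Polynomial.X +
        Polynomial.C c := by
      rw [hQdef]
      simp [hψ, MvPolynomial.algebraMap_eq, Polynomial.algebraMap_eq]
    have hw2 : w ^ 2 = Polynomial.C (d^2-4*a) * Polynomial.X ^ 2 +
        Polynomial.C (2*d*e-4*b) * Polynomial.X + Polynomial.C (e^2-4*c) := by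
      have h1 : w ^ 2 = (ψ (u1*v0) + ψ (u0*v1)) ^ 2 - 4 * (ψ (u1*v0) * ψ (u0*v1)) := by
        rw [hwdef]; ring
      have h2' : ψ (u1*v0) + ψ (u0*v1) = ψ L := by rw [← map_add, c1]
      have h3' : ψ (u1*v0) * ψ (u0*v1) = ψ Q0 := by
        rw [← map_mul]
        congr 1
        calc u1*v0*(u0*v1) = u0*v0*(u1*v1) := by ring
          _ = Q0 := by rw [← c2, ← c0, mul_one]
      rw [h1, h2', h3', hψL, hψQ]
      have : ∀ r : ℝ, Polynomial.C r = (Polynomial.C r : Polynomial ℝ) := fun _ => rfl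
      simp only [map_sub, map_mul, map_add, map_pow, map_ofNat]
      ring
    rcases eq_or_ne (d^2-4*a) 0 with hA | hA
    · rw [hA, mul_zero, zero_mul, sub_zero] at h
      nlinarith [sq_nonneg (2*d*e-4*b)]
    · have hwne : w ≠ 0 := by
        intro h0
        rw [h0] at hw2
        have := congrArg (fun p => Polynomial.coeff p 2) hw2.symm
        simp only [pcoeff2] at this
        norm_num at this
        exact hA this
      have hdw : w.natDegree = 1 := by
        have hsq : (w ^ 2).natDegree = 2 := by
          rw [hw2]
          compute_degree!
        rw [Polynomial.natDegree_pow] at hsq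
        omega
      set w1 := w.coeff 1 with hw1d
      set w0 := w.coeff 0 with hw0d
      rw [Polynomial.eq_X_add_C_of_natDegree_le_one hdw.le] at hw2
      have hexp2 : (Polynomial.C w1 * Polynomial.X + Polynomial.C w0) ^ 2 =
          Polynomial.C (w1^2) * Polynomial.X ^ 2 +
            Polynomial.C (2*(w1*w0)) * Polynomial.X + Polynomial.C (w0^2) := by
        simp only [Polynomial.C_mul, Polynomial.C_add, Polynomial.C_pow, map_ofNat]
        ring
      rw [hexp2] at hw2
      have e2 : w1^2 = d^2-4*a := by
        have := congrArg (fun p => Polynomial.coeff p 2) hw2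
        simpa only [pcoeff2] using this
      have e1 : 2*(w1*w0) = 2*d*e-4*b := by
        have := congrArg (fun p => Polynomial.coeff p 1) hw2
        simpa only [pcoeff1] using this
      have e0 : w0^2 = e^2-4*c := by
        have := congrArg (fun p => Polynomial.coeff p 0) hw2
        simpa only [pcoeff0] using this
      rw [← e2, ← e1, ← e0] at h
      have hz : (2*(w1*w0))^2 - 4*(w1^2)*(w0^2) = 0 := by ring
      linarith

lemma qf_irred (a b c d e : ℝ)
    (h : (2*d*e-4*b)^2 - 4*(d^2-4*a)*(e^2-4*c) < 0) : Irreducible (Qf a b c d e 1) := by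
  have h1 : Irreducible (finSuccEquiv ℝ 2 (Qf a b c d e 1)) := by
    rw [fse_Qf]
    simpa using key_irred a b c d e h
  exact (MulEquiv.irreducible_iff (finSuccEquiv ℝ 2)).mp h1

theorem Nuij_path_conic (s d1 d2 r11 r12 r22 : ℝ) :
    (4 * quadricDisc (Nop s
        (Matrix.det
          (!![X 0 + C d1 * X 1 + C r11 * X 2, C r12 * X 2;
              C r12 * X 2, X 0 + C d2 * X 1 + C r22 * X 2] :
            Matrix (Fin 2) (Fin 2) (MvPolynomial (Fin 3) ℝ)))) =
      2 * s ^ 2 * (s - 1) ^ 2 * (d1 - d2) ^ 2 +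
        2 * s ^ 2 * (s - 1) ^ 2 * (r11 - r22) ^ 2 +
        s ^ 4 * r12 ^ 2 * (d1 - d2) ^ 2 +
        8 * r12 ^ 2 * s ^ 2 * (1 - s) ^ 2 +
        16 * (s - 1) ^ 4) ∧
    (0 ≤ s → s < 1 →
      0 < quadricDisc (Nop s
          (Matrix.det
            (!![X 0 + C d1 * X 1 + C r11 * X 2, C r12 * X 2;
                C r12 * X 2, X 0 + C d2 * X 1 + C r22 * X 2] :
              Matrix (Fin 2) (Fin 2) (MvPolynomial (Fin 3) ℝ)))) ∧
        Irreducible (Nop s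
          (Matrix.det
            (!![X 0 + C d1 * X 1 + C r11 * X 2, C r12 * X 2;
                C r12 * X 2, X 0 + C d2 * X 1 + C r22 * X 2] :
              Matrix (Fin 2) (Fin 2) (MvPolynomial (Fin 3) ℝ))))) := by
  rw [nop_eq, disc_Qf]
  constructor
  · ring
  · intro hs0 hs1
    constructor
    · nlinarith [pow_pos (show (0:ℝ) < 1 - s by linarith) 4,
        sq_nonneg (s*(s-1)*(d1-d2)), sq_nonneg (s*(s-1)*(r11-r22)),
        sq_nonneg (s^2*r12*(d1-d2)), sq_nonneg (r12*s*(1-s))]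
    · apply qf_irred
      nlinarith [pow_pos (show (0:ℝ) < 1 - s by linarith) 4,
        sq_nonneg (s*(s-1)*(d1-d2)), sq_nonneg (s*(s-1)*(r11-r22)),
        sq_nonneg (s^2*r12*(d1-d2)), sq_nonneg (r12*s*(1-s))]
end

section
/- Let p be a monic real univariate polynomial of degree d all of whose roots are real, and let s ≥ 0. Then all roots of p + s·p' are real. Moreover, if s > 0 and the roots of p are distinct, the roots of p + s·p' are distinct. -/
open Polynomial

private lemma multiset_sum_pos (s : Multiset ℝ) (h : ∀ x ∈ s, 0 < x) (hne : s ≠ 0) :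
    0 < s.sum := by
  induction s using Multiset.induction_on with
  | empty => exact absurd rfl hne
  | cons a t ih =>
    rw [Multiset.sum_cons]
    rcases eq_or_ne t 0 with rfl | ht
    · simpa using h a (Multiset.mem_cons_self a 0)
    · exact add_pos (h a (Multiset.mem_cons_self a t))
        (ih (fun x hx => h x (Multiset.mem_cons_of_mem hx)) ht)

private lemma im_multiset_sum (s : Multiset ℂ) : s.sum.im = (s.map Complex.im).sum :=
  map_multiset_sum Complex.imAddGroupHom s

private lemma re_multiset_sum (s : Multiset ℂ) : s.sum.re = (s.map Complex.re).sum :=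
  map_multiset_sum Complex.reAddGroupHom s

private lemma eval_deriv_prod (z : ℂ) (R : Multiset ℂ) (h : ∀ r ∈ R, z ≠ r) :
    eval z (derivative (R.map (fun r => X - C r)).prod) =
      eval z (R.map (fun r => X - C r)).prod * (R.map (fun r => (z - r)⁻¹)).sum := by
  induction R using Multiset.induction_on with
  | empty => simp
  | cons r R ih =>
    have hz : z - r ≠ 0 := sub_ne_zero.2 (h r (Multiset.mem_cons_self r R))
    have ih' := ih (fun a ha => h a (Multiset.mem_cons_of_mem ha))
    simp only [Multiset.map_cons, Multiset.prod_cons, Multiset.sum_cons, derivative_mul,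
      derivative_sub, derivative_X, derivative_C, sub_zero, one_mul, eval_add, eval_mul,
      eval_sub, eval_X, eval_C, ih']
    field_simp

private lemma eval_deriv2_prod (z : ℂ) (R : Multiset ℂ) (h : ∀ r ∈ R, z ≠ r) :
    eval z (derivative (derivative (R.map (fun r => X - C r)).prod)) =
      eval z (R.map (fun r => X - C r)).prod *
        (((R.map (fun r => (z - r)⁻¹)).sum) ^ 2 - (R.map (fun r => ((z - r)⁻¹) ^ 2)).sum) := by
  induction R using Multiset.induction_on with
  | empty => simp
  | cons r R ih =>
    have hz : z - r ≠ 0 := sub_ne_zero.2 (h r (Multiset.mem_cons_self r R))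
    have h' : ∀ a ∈ R, z ≠ a := fun a ha => h a (Multiset.mem_cons_of_mem ha)
    have ih' := ih h'
    have ih1 := eval_deriv_prod z R h'
    simp only [Multiset.map_cons, Multiset.prod_cons, Multiset.sum_cons, derivative_mul,
      derivative_sub, derivative_X, derivative_C, sub_zero, one_mul, derivative_add, eval_add,
      eval_mul, eval_sub, eval_X, eval_C, ih', ih1]
    field_simp
    ring

/-- if `p ∈ ℝ[t]` is monic of degree `d` with all roots real and
`s ≥ 0`, then all roots of `p + s·p'` are real; moreover if `s > 0` and the roots
of `p` are distinct, then the roots of `p + s·p'` are distinct. -/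
theorem roots_real_add_smul_derivative (d : ℕ) (hd : 1 ≤ d) (p : Polynomial ℝ)
    (hmonic : p.Monic) (hdeg : p.natDegree = d)
    (hreal : ∀ z : ℂ, Polynomial.aeval z p = 0 → z.im = 0)
    (s : ℝ) (hs : 0 ≤ s) :
    (∀ z : ℂ, Polynomial.aeval z (p + C s * derivative p) = 0 → z.im = 0) ∧
      (0 < s → ((p.map (algebraMap ℝ ℂ)).roots.Nodup →
        (((p + C s * derivative p).map (algebraMap ℝ ℂ)).roots.Nodup))) := by
  set P : Polynomial ℂ := p.map (algebraMap ℝ ℂ) with hPdef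
  have hPmonic : P.Monic := hmonic.map _
  have hPne : P ≠ 0 := hPmonic.ne_zero
  have haev : ∀ z : ℂ, Polynomial.aeval z p = eval z P := by
    intro z; rw [aeval_def, hPdef, eval_map]
  have haev' : ∀ z : ℂ, Polynomial.aeval z (derivative p) = eval z (derivative P) := by
    intro z; rw [aeval_def, hPdef, derivative_map, eval_map]
  have hsplits : Splits P := IsAlgClosed.splits P
  have hcard : P.roots.card = d := by
    rw [splits_iff_card_roots.mp hsplits, hPdef, natDegree_map, hdeg]
  have hRne : P.roots ≠ 0 := by
    intro h0; rw [h0] at hcard; simp at hcard; omega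
  have hfact : P = (P.roots.map fun a => X - C a).prod :=
    hsplits.eq_prod_roots_of_monic hPmonic
  have hrootsreal : ∀ r ∈ P.roots, r.im = 0 := by
    intro r hr
    exact hreal r (by rw [haev]; exact (mem_roots hPne).mp hr)
  -- key evaluation of the perturbed polynomial
  have hkey : ∀ z : ℂ, Polynomial.aeval z (p + C s * derivative p) =
      eval z P + (s : ℂ) * eval z (derivative P) := by
    intro z
    rw [map_add, map_mul, aeval_C, haev, haev']
    norm_num
  -- Part 1
  have part1 : ∀ z : ℂ, Polynomial.aeval z (p + C s * derivative p) = 0 → z.im = 0 := by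
    intro z hz
    by_contra him
    have hp0 : eval z P ≠ 0 := by
      intro h; exact him (hreal z (by rw [haev]; exact h))
    have hzz : ∀ r ∈ P.roots, z ≠ r := by
      intro r hr he
      exact him (he ▸ hrootsreal r hr)
    have hs0 : s ≠ 0 := by
      intro h
      rw [hkey] at hz
      simp [h] at hz
      exact hp0 hz
    rw [hkey] at hz
    have hd1 : eval z (derivative P) =
        eval z P * (P.roots.map (fun r => (z - r)⁻¹)).sum := by
      have h := eval_deriv_prod z P.roots hzz
      rw [← hfact] at h
      exact h
    set S : ℂ := (P.roots.map (fun r => (z - r)⁻¹)).sum with hSdef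
    have heq : eval z P * (1 + (s : ℂ) * S) = 0 := by
      rw [hd1] at hz; linear_combination hz
    have hS : (1 : ℂ) + (s : ℂ) * S = 0 := by
      rcases mul_eq_zero.mp heq with h | h
      · exact absurd h hp0
      · exact h
    have hSim : S.im = 0 := by
      have h := congrArg Complex.im hS
      simp only [Complex.add_im, Complex.one_im, Complex.mul_im, Complex.ofReal_im,
        Complex.ofReal_re, zero_mul, add_zero, zero_add, Complex.zero_im] at h
      rcases mul_eq_zero.mp h with h' | h'
      · exact absurd h' hs0
      · exact h'
    -- compute the imaginary part of S
    have him2 : S.im = -z.im * (P.roots.map (fun r => (Complex.normSq (z - r))⁻¹)).sum := by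
      rw [hSdef, im_multiset_sum, Multiset.map_map]
      rw [← Multiset.sum_map_mul_left]
      apply congrArg
      apply Multiset.map_congr rfl
      intro r hr
      simp only [Function.comp_apply, Complex.inv_im]
      have : (z - r).im = z.im := by
        rw [Complex.sub_im, hrootsreal r hr, sub_zero]
      rw [this]
      field_simp
    have hpos : 0 < (P.roots.map (fun r => (Complex.normSq (z - r))⁻¹)).sum := by
      apply multiset_sum_pos
      · intro x hx
        obtain ⟨r, hr, rfl⟩ := Multiset.mem_map.mp hx
        have : z - r ≠ 0 := sub_ne_zero.2 (hzz r hr)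
        exact inv_pos.2 (Complex.normSq_pos.mpr this)
      · simpa using hRne
    rw [him2] at hSim
    rcases mul_eq_zero.mp hSim with h | h
    · exact him (by linarith [neg_eq_zero.mp h])
    · exact absurd h (ne_of_gt hpos)
  refine ⟨part1, ?_⟩
  intro hspos hnodup
  -- the perturbed polynomial
  set q : Polynomial ℝ := p + C s * derivative p with hqdef
  have hqmonic : q.Monic := by
    apply hmonic.add_of_left
    calc degree (C s * derivative p) ≤ degree (derivative p) := by
          rcases eq_or_ne s 0 with rfl | hs0
          · simp
          · rw [degree_mul, degree_C hs0]; simp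
      _ < degree p := degree_derivative_lt (fun h => by simp [h] at hdeg; omega)
  set Q : Polynomial ℂ := q.map (algebraMap ℝ ℂ) with hQdef
  have hQne : Q ≠ 0 := (hqmonic.map _).ne_zero
  rw [Multiset.nodup_iff_count_le_one]
  intro z
  rw [count_roots]
  by_contra hcount
  push_neg at hcount
  have hmult : Q.IsRoot z ∧ (derivative Q).IsRoot z :=
    (one_lt_rootMultiplicity_iff_isRoot hQne).mp hcount
  have haevq : Polynomial.aeval z q = eval z Q := by
    rw [aeval_def, hQdef, eval_map]
  have hz0 : Polynomial.aeval z q = 0 := by rw [haevq]; exact hmult.1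
  have hzim : z.im = 0 := part1 z hz0
  -- two equations
  have E1 : eval z P + (s : ℂ) * eval z (derivative P) = 0 := by
    rw [← hkey]; exact hz0
  have E2 : eval z (derivative P) + (s : ℂ) * eval z (derivative (derivative P)) = 0 := by
    have : derivative Q = (derivative p + C s * derivative (derivative p)).map (algebraMap ℝ ℂ) := by
      rw [hQdef, derivative_map, hqdef]
      congr 1
      simp [derivative_add, derivative_mul]
    have h2 : eval z ((derivative p + C s * derivative (derivative p)).map (algebraMap ℝ ℂ)) = 0 := by
      rw [← this]; exact hmult.2
    rw [eval_map, ← aeval_def, map_add, map_mul, aeval_C, haev'] at h2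
    have : Polynomial.aeval z (derivative (derivative p)) = eval z (derivative (derivative P)) := by
      rw [aeval_def, hPdef, derivative_map, derivative_map, eval_map]
    rw [this] at h2
    simpa using h2
  have hs0 : (s : ℂ) ≠ 0 := by exact_mod_cast ne_of_gt hspos
  rcases eq_or_ne (eval z P) 0 with hP0 | hP0
  · -- z is a root of P; then also of P', contradicting nodup
    have hP'0 : eval z (derivative P) = 0 := by
      rw [hP0, zero_add] at E1
      exact (mul_eq_zero.mp E1).resolve_left hs0
    have : 1 < P.rootMultiplicity z :=
      (one_lt_rootMultiplicity_iff_isRoot hPne).mpr ⟨hP0, hP'0⟩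
    have hle := (Multiset.nodup_iff_count_le_one.mp hnodup) z
    rw [count_roots] at hle
    omega
  · have hzz : ∀ r ∈ P.roots, z ≠ r := by
      intro r hr he
      apply hP0
      rw [he]
      exact (mem_roots hPne).mp hr
    set S : ℂ := (P.roots.map (fun r => (z - r)⁻¹)).sum with hSdef
    set T : ℂ := (P.roots.map (fun r => ((z - r)⁻¹) ^ 2)).sum with hTdef
    have hd1 : eval z (derivative P) = eval z P * S := by
      have h := eval_deriv_prod z P.roots hzz
      rw [← hfact] at h
      exact h
    have hd2 : eval z (derivative (derivative P)) = eval z P * (S ^ 2 - T) := by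
      have h := eval_deriv2_prod z P.roots hzz
      rw [← hfact] at h
      exact h
    rw [hd1] at E1 E2
    rw [hd2] at E2
    have hSs : (1 : ℂ) + (s : ℂ) * S = 0 := by
      rcases mul_eq_zero.mp (show eval z P * (1 + (s : ℂ) * S) = 0 by linear_combination E1) with h | h
      · exact absurd h hP0
      · exact h
    have hT0 : T = 0 := by
      have h2 : S + (s : ℂ) * (S ^ 2 - T) = 0 := by
        rcases mul_eq_zero.mp (show eval z P * (S + (s : ℂ) * (S ^ 2 - T)) = 0 by
          linear_combination E2) with h | h
        · exact absurd h hP0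
        · exact h
      have : (s : ℂ) * T = S * (1 + (s : ℂ) * S) := by ring_nf; linear_combination -h2
      rw [hSs, mul_zero] at this
      exact (mul_eq_zero.mp this).resolve_left hs0
    -- but T has positive real part
    have hTre : 0 < T.re := by
      rw [hTdef, re_multiset_sum, Multiset.map_map]
      apply multiset_sum_pos
      · intro x hx
        obtain ⟨r, hr, rfl⟩ := Multiset.mem_map.mp hx
        have hne : z - r ≠ 0 := sub_ne_zero.2 (hzz r hr)
        have him' : ((z - r)⁻¹).im = 0 := by
          rw [Complex.inv_im, Complex.sub_im, hrootsreal r hr, hzim]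
          simp
        have hre' : ((z - r)⁻¹).re ≠ 0 := by
          intro h
          exact inv_ne_zero hne (Complex.ext h him')
        simp only [Function.comp_apply, sq, Complex.mul_re, him']
        simp only [mul_zero, sub_zero]
        exact mul_self_pos.mpr hre'
      · simpa using hRne
    rw [hT0] at hTre
    simp at hTre
end

section
/- The polynomial p = (1/19)(19t⁴ − 31x²t² − 86y²t² + 9x⁴ + 41x²y² + 39y⁴) is hyperbolic: for every (u,v) ∈ ℝ², all roots of t ↦ p(t,u,v) are real. -/
open MvPolynomial

/-- the quartic
`p = (1/19)(19t⁴ − 31x²t² − 86y²t² + 9x⁴ + 41x²y² + 39y⁴)` is hyperbolic: for every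
`(u,v) ∈ ℝ²` all complex roots of `t ↦ p(t,u,v)` are real. Here `X 0 = t`,
`X 1 = x`, `X 2 = y`. -/
theorem quartic_example_hyperbolic :
    ∀ u v : ℝ, ∀ z : ℂ,
      Polynomial.aeval z
        (MvPolynomial.aeval
          (fun i : Fin 3 =>
            Fin.cases (Polynomial.X : Polynomial ℝ)
              (fun j : Fin 2 => Polynomial.C (![u, v] j)) i)
          (C (1 / 19 : ℝ) *
            (C (19 : ℝ) * X 0 ^ 4 - C (31 : ℝ) * X 1 ^ 2 * X 0 ^ 2 -
              C (86 : ℝ) * X 2 ^ 2 * X 0 ^ 2 + C (9 : ℝ) * X 1 ^ 4 +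
              C (41 : ℝ) * X 1 ^ 2 * X 2 ^ 2 + C (39 : ℝ) * X 2 ^ 4))) = 0 →
      z.im = 0 := by
  intro u v z h
  simp [map_mul, map_add, map_sub, map_pow, Fin.cases] at h
  have e1 : ((Polynomial.aeval z) (Fin.induction (Polynomial.X : Polynomial ℝ) (fun i _ => Polynomial.C (![u, v] i)) (1 : Fin 3)) : ℂ) = (u : ℂ) := by
    rw [show (1:Fin 3) = Fin.succ 0 from rfl, Fin.induction_succ]
    simp
  have e2 : ((Polynomial.aeval z) (Fin.induction (Polynomial.X : Polynomial ℝ) (fun i _ => Polynomial.C (![u, v] i)) (2 : Fin 3)) : ℂ) = (v : ℂ) := by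
    rw [show (2:Fin 3) = Fin.succ 1 from rfl, Fin.induction_succ]
    simp
  rw [e1, e2] at h
  obtain ⟨a, b⟩ := z
  rw [Complex.ext_iff] at h
  simp [pow_succ, Complex.ext_iff] at h
  obtain ⟨hre, him⟩ := h
  show b = 0
  by_contra hb
  ring_nf at hre him
  have hb2 : (0:ℝ) < b^2 := by positivity
  have key : a * b * (38*a^2 - 38*b^2 - 31*u^2 - 86*v^2) = 0 := by
    linear_combination him / 2
  rcases mul_eq_zero.mp key with hab | hK
  · have ha : a = 0 := by
      rcases mul_eq_zero.mp hab with h | h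
      · exact h
      · exact absurd h hb
    subst ha
    nlinarith [hb2, mul_pos hb2 hb2, sq_nonneg (b*u), sq_nonneg (b*v), sq_nonneg (u*v), sq_nonneg u, sq_nonneg v]
  · nlinarith [hK, hre, hb2, mul_pos hb2 hb2, sq_nonneg (u*v), sq_nonneg u, sq_nonneg v, sq_nonneg (a*b), sq_nonneg (a^2-b^2), sq_nonneg (a^2+b^2)]
end

section
/- The set of strictly hyperbolic polynomials (homogeneous of degree d, monic in t, in n+1 variables) is open in the affine space of monic homogeneous polynomials of degree d with real coefficients. -/
open MvPolynomial

/-- `p` is strictly hyperbolic: for every `u ≠ 0`, `t ↦ p(t,u)` has `d` distinct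
real roots. -/
def StrictlyHyperbolic (n d : ℕ) (p : MvPolynomial (Fin (n + 1)) ℝ) : Prop :=
  ∀ u : Fin n → ℝ, u ≠ 0 →
    Multiset.card (univRestrict n p u).roots = d ∧ (univRestrict n p u).roots.Nodup

lemma eval_univRestrict (n : ℕ) (q : MvPolynomial (Fin (n + 1)) ℝ) (u : Fin n → ℝ) (s : ℝ) :
    (univRestrict n q u).eval s = MvPolynomial.eval (Fin.cases s u) q := by
  have h : (Polynomial.aeval s : Polynomial ℝ →ₐ[ℝ] ℝ).comp
      (MvPolynomial.aeval (fun i : Fin (n + 1) =>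
        Fin.cases (Polynomial.X : Polynomial ℝ) (fun j => Polynomial.C (u j)) i))
      = MvPolynomial.aeval (Fin.cases s u) := by
    apply MvPolynomial.algHom_ext
    intro i
    induction i using Fin.cases with
    | zero => simp
    | succ j => simp
  calc (univRestrict n q u).eval s
      = (Polynomial.aeval s : Polynomial ℝ →ₐ[ℝ] ℝ) (univRestrict n q u) := by
        rw [Polynomial.coe_aeval_eq_eval]
    _ = MvPolynomial.aeval (Fin.cases s u) q := by rw [univRestrict, ← AlgHom.comp_apply, h]
    _ = MvPolynomial.eval (Fin.cases s u) q := by rw [MvPolynomial.aeval_def, MvPolynomial.eval]; rfl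


lemma degree_of_mem_support {n d : ℕ} {q : MvPolynomial (Fin (n+1)) ℝ} (hq : q.IsHomogeneous d)
    {m : Fin (n+1) →₀ ℕ} (hm : q.coeff m ≠ 0) : ∑ i, m i = d := by
  have h := hq hm
  rw [← h, Finsupp.weight_apply, Finsupp.sum_fintype]
  · simp
  · simp


noncomputable def bigM (n d : ℕ) : Finset (Fin (n+1) →₀ ℕ) :=
  Finset.Iic (Finsupp.equivFunOnFinite.symm fun _ => d)


lemma eval_bound {n d : ℕ} {r : MvPolynomial (Fin (n+1)) ℝ} (hq : r.IsHomogeneous d)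
    {ε : ℝ} (hc : ∀ m, |r.coeff m| ≤ ε) {x : Fin (n+1) → ℝ} {R : ℝ} (hR : 1 ≤ R)
    (hx : ∀ i, |x i| ≤ R) :
    |MvPolynomial.eval x r| ≤ ((bigM n d).card : ℝ) * ε * R ^ d := by
  have hε : 0 ≤ ε := le_trans (abs_nonneg _) (hc 0)
  have hR0 : 0 ≤ R := le_trans zero_le_one hR
  rw [MvPolynomial.eval_eq']
  calc |∑ m ∈ r.support, r.coeff m * ∏ i, x i ^ m i|
      ≤ ∑ m ∈ r.support, |r.coeff m * ∏ i, x i ^ m i| := Finset.abs_sum_le_sum_abs _ _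
    _ ≤ ∑ m ∈ r.support, ε * R ^ d := by
        apply Finset.sum_le_sum
        intro m hm
        rw [MvPolynomial.mem_support_iff] at hm
        rw [abs_mul]
        have h1 : |∏ i, x i ^ m i| ≤ R ^ d := by
          rw [Finset.abs_prod]
          calc ∏ i, |x i ^ m i| ≤ ∏ i, R ^ m i := by
                apply Finset.prod_le_prod
                · intro i _; positivity
                · intro i _; rw [abs_pow]; exact pow_le_pow_left₀ (abs_nonneg _) (hx i) _
            _ = R ^ (∑ i, m i) := by rw [Finset.prod_pow_eq_pow_sum]
            _ = R ^ d := by rw [degree_of_mem_support hq hm]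
        exact mul_le_mul (hc m) h1 (abs_nonneg _) hε
    _ = (r.support.card : ℝ) * (ε * R ^ d) := by rw [Finset.sum_const, nsmul_eq_mul]
    _ ≤ ((bigM n d).card : ℝ) * (ε * R ^ d) := by
        apply mul_le_mul_of_nonneg_right _ (by positivity)
        apply Nat.cast_le.mpr
        apply Finset.card_le_card
        intro m hm
        rw [MvPolynomial.mem_support_iff] at hm
        rw [bigM, Finset.mem_Iic]
        intro i
        simp only [Finsupp.coe_equivFunOnFinite_symm]
        calc m i ≤ ∑ j, m j := Finset.single_le_sum (fun j _ => Nat.zero_le _) (Finset.mem_univ i)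
          _ = d := degree_of_mem_support hq hm
    _ = ((bigM n d).card : ℝ) * ε * R ^ d := by ring


lemma natDegree_univRestrict_le {n d : ℕ} {q : MvPolynomial (Fin (n+1)) ℝ}
    (hq : q.IsHomogeneous d) (u : Fin n → ℝ) : (univRestrict n q u).natDegree ≤ d := by
  rw [univRestrict, MvPolynomial.aeval_def, MvPolynomial.eval₂_eq']
  apply Polynomial.natDegree_sum_le_of_forall_le
  intro m hm
  rw [MvPolynomial.mem_support_iff] at hm
  calc (algebraMap ℝ (Polynomial ℝ) (q.coeff m) * ∏ i, (Fin.cases Polynomial.X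
        (fun j => Polynomial.C (u j)) i : Polynomial ℝ) ^ m i).natDegree
      ≤ (algebraMap ℝ (Polynomial ℝ) (q.coeff m)).natDegree
        + (∏ i, (Fin.cases Polynomial.X (fun j => Polynomial.C (u j)) i : Polynomial ℝ) ^ m i).natDegree :=
        Polynomial.natDegree_mul_le
    _ ≤ 0 + ∑ i, ((Fin.cases Polynomial.X (fun j => Polynomial.C (u j)) i : Polynomial ℝ) ^ m i).natDegree := by
        gcongr
        · exact le_of_eq (Polynomial.natDegree_C _)
        · exact Polynomial.natDegree_prod_le _ _
    _ ≤ ∑ i, m i := by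
        rw [zero_add]
        apply Finset.sum_le_sum
        intro i _
        calc ((Fin.cases Polynomial.X (fun j => Polynomial.C (u j)) i : Polynomial ℝ) ^ m i).natDegree
            ≤ m i * ((Fin.cases Polynomial.X (fun j => Polynomial.C (u j)) i : Polynomial ℝ)).natDegree :=
            Polynomial.natDegree_pow_le
          _ ≤ m i := by
              induction i using Fin.cases with
              | zero => simp
              | succ j => simp
    _ = d := degree_of_mem_support hq hm


lemma exists_root_of_mul_neg {f : ℝ → ℝ} (hf : Continuous f) {a b : ℝ} (hab : a < b)
    (h : f a * f b < 0) : ∃ x ∈ Set.Ioo a b, f x = 0 := by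
  rcases mul_neg_iff.mp h with ⟨ha, hb⟩ | ⟨ha, hb⟩
  · have := intermediate_value_Ioo' (le_of_lt hab) hf.continuousOn
    have h0 : (0:ℝ) ∈ Set.Ioo (f b) (f a) := ⟨hb, ha⟩
    obtain ⟨x, hx, hfx⟩ := this h0
    exact ⟨x, hx, hfx⟩
  · have := intermediate_value_Ioo (le_of_lt hab) hf.continuousOn
    have h0 : (0:ℝ) ∈ Set.Ioo (f a) (f b) := ⟨ha, hb⟩
    obtain ⟨x, hx, hfx⟩ := this h0
    exact ⟨x, hx, hfx⟩


lemma roots_of_sign_changes {P : Polynomial ℝ} {d : ℕ} (hd : 1 ≤ d) (hdeg : P.natDegree ≤ d)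
    {s : ℕ → ℝ} (hmono : ∀ i < d, s i < s (i+1))
    (hsign : ∀ i < d, P.eval (s i) * P.eval (s (i+1)) < 0) :
    Multiset.card P.roots = d ∧ P.roots.Nodup := by
  have hP : P ≠ 0 := by
    intro h
    have := hsign 0 hd
    rw [h] at this; simp at this
  have smono : ∀ i j, i < j → j ≤ d → s i < s j := by
    intro i j hij hjd
    induction j with
    | zero => omega
    | succ k ih =>
      rcases Nat.lt_or_ge i k with hik | hik
      · exact lt_trans (ih hik (by omega)) (hmono k (by omega))
      · have : i = k := by omega
        subst this
        exact hmono i (by omega)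
  have hr : ∀ i : Fin d, ∃ x, x ∈ Set.Ioo (s i) (s (i+1)) ∧ P.eval x = 0 := by
    intro i
    obtain ⟨x, hx, hfx⟩ := exists_root_of_mul_neg (Polynomial.continuous P)
      (hmono i i.2) (hsign i i.2)
    exact ⟨x, hx, hfx⟩
  choose r hr1 hr2 using hr
  have rinj : Function.Injective r := by
    have rmono : StrictMono r := by
      intro i j hij
      calc r i < s (↑i + 1) := (hr1 i).2
        _ ≤ s ↑j := by
          rcases Nat.lt_or_ge (↑i + 1) (↑j : ℕ) with h | h
          · exact le_of_lt (smono _ _ h (le_of_lt j.2))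
          · have : (↑i + 1 : ℕ) = ↑j := by omega
            rw [this]
        _ < r j := (hr1 j).1
    exact rmono.injective
  set T : Multiset ℝ := Multiset.map r Finset.univ.val with hT
  have hTnodup : T.Nodup := Multiset.Nodup.map rinj Finset.univ.nodup
  have hTcard : Multiset.card T = d := by
    rw [hT, Multiset.card_map]
    simp
  have hTle : T ≤ P.roots := by
    rw [Multiset.le_iff_count]
    intro x
    by_cases hx : x ∈ T
    · have h1 : Multiset.count x T ≤ 1 := Multiset.nodup_iff_count_le_one.mp hTnodup x
      have h2 : 1 ≤ Multiset.count x P.roots := by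
        rw [Multiset.one_le_count_iff_mem, Polynomial.mem_roots hP]
        obtain ⟨i, _, hi⟩ := Multiset.mem_map.mp hx
        rw [← hi]; exact hr2 i
      omega
    · rw [Multiset.count_eq_zero_of_notMem hx]
      exact Nat.zero_le _
  have hcard : Multiset.card P.roots ≤ d := le_trans (Polynomial.card_roots' P) hdeg
  have : T = P.roots := Multiset.eq_of_le_of_card_le hTle (by omega)
  rw [← this]
  exact ⟨hTcard, hTnodup⟩


lemma exists_sample_points {P : Polynomial ℝ} {d : ℕ} (hd : 1 ≤ d) (hdeg : P.natDegree ≤ d)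
    (hcard : Multiset.card P.roots = d) (hnodup : P.roots.Nodup) :
    ∃ s : ℕ → ℝ, (∀ i < d, s i < s (i+1)) ∧
      (∀ i < d, P.eval (s i) * P.eval (s (i+1)) < 0) := by
  have hP : P ≠ 0 := by
    intro h; rw [h] at hcard; simp at hcard; omega
  have hdeg' : P.natDegree = d := le_antisymm hdeg (hcard ▸ Polynomial.card_roots' P)
  have hsplits : P.Splits := Polynomial.splits_iff_card_roots.mpr (by omega)
  have hfact := hsplits.eq_prod_roots
  set F : Finset ℝ := P.roots.toFinset with hF
  have hFcard : F.card = d := by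
    rw [hF, Multiset.toFinset_card_of_nodup hnodup, hcard]
  have hFval : F.val = P.roots := by
    rw [hF, Multiset.toFinset_val, Multiset.dedup_eq_self.mpr hnodup]
  set f := F.orderIsoOfFin hFcard with hf
  set g : Fin d → ℝ := fun i => ↑(f i) with hg
  have gmono : StrictMono g := by
    intro i j hij
    exact (Subtype.coe_lt_coe).mpr (f.strictMono hij)
  -- sample points
  set s : ℕ → ℝ := fun i =>
    if i = 0 then g ⟨0, hd⟩ - 1
    else if hid : i < d then (g ⟨i-1, by omega⟩ + g ⟨i, hid⟩)/2
    else g ⟨d-1, by omega⟩ + 1 with hs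
  have key : ∀ i ≤ d, ∀ j : Fin d, ((j : ℕ) < i → g j < s i) ∧ (i ≤ (j : ℕ) → s i < g j) := by
    intro i hi j
    constructor
    · intro hji
      rw [hs]
      simp only
      rcases Nat.eq_zero_or_pos i with h0 | h0
      · omega
      · rw [if_neg (by omega)]
        rcases Nat.lt_or_ge i d with hid | hid
        · rw [dif_pos hid]
          have h1 : g j ≤ g ⟨i-1, by omega⟩ := gmono.monotone (by simp [Fin.le_def]; omega)
          have h2 : g ⟨i-1, by omega⟩ < g ⟨i, hid⟩ := gmono (by simp [Fin.lt_def]; omega)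
          linarith
        · rw [dif_neg (by omega)]
          have h1 : g j ≤ g ⟨d-1, by omega⟩ := gmono.monotone (by simp [Fin.le_def]; omega)
          linarith
    · intro hij
      rw [hs]
      simp only
      rcases Nat.eq_zero_or_pos i with h0 | h0
      · rw [h0, if_pos rfl]
        have h1 : g ⟨0, hd⟩ ≤ g j := gmono.monotone (by simp [Fin.le_def])
        linarith
      · have hid : i < d := by have := j.2; omega
        rw [if_neg (by omega), dif_pos hid]
        have h1 : g ⟨i, hid⟩ ≤ g j := gmono.monotone (by simp [Fin.le_def]; omega)
        have h2 : g ⟨i-1, by omega⟩ < g ⟨i, hid⟩ := gmono (by simp [Fin.lt_def]; omega)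
        linarith
  have smono : ∀ i < d, s i < s (i+1) := by
    intro i hi
    have h1 := (key i (le_of_lt hi) ⟨i, hi⟩).2 (le_refl _)
    have h2 := (key (i+1) hi ⟨i, hi⟩).1 (Nat.lt_succ_self i)
    linarith
  refine ⟨s, smono, ?_⟩
  -- evaluation formula
  have heval : ∀ x : ℝ, P.eval x = P.leadingCoeff * ∏ j : Fin d, (x - g j) := by
    intro x
    conv_lhs => rw [hfact]
    rw [Polynomial.eval_mul, Polynomial.eval_C, Polynomial.eval_multiset_prod]
    congr 1
    rw [Multiset.map_map]
    have hroots : P.roots = F.val := hFval.symm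
    rw [hroots]
    have h1 : (Multiset.map ((fun p => Polynomial.eval x p) ∘ fun a => Polynomial.X - Polynomial.C a) F.val).prod
        = ∏ a ∈ F, (x - a) := by
      rw [Finset.prod]
      congr 1
      apply Multiset.map_congr rfl
      intro a _
      simp
    rw [h1]
    rw [← Finset.prod_coe_sort F (fun a => x - a)]
    exact (Equiv.prod_comp f.toEquiv (fun a => x - (a : ℝ))).symm
  intro i hi
  rw [heval, heval]
  have hlc : P.leadingCoeff ≠ 0 := Polynomial.leadingCoeff_ne_zero.mpr hP
  have hrearrange : P.leadingCoeff * (∏ j : Fin d, (s i - g j)) *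
      (P.leadingCoeff * ∏ j : Fin d, (s (i+1) - g j))
      = P.leadingCoeff^2 * ∏ j : Fin d, ((s i - g j) * (s (i+1) - g j)) := by
    rw [Finset.prod_mul_distrib]; ring
  rw [hrearrange]
  have hterm : (s i - g ⟨i, hi⟩) * (s (i+1) - g ⟨i, hi⟩) < 0 := by
    have h1 := (key i (le_of_lt hi) ⟨i, hi⟩).2 (le_refl _)
    have h2 := (key (i+1) hi ⟨i, hi⟩).1 (Nat.lt_succ_self i)
    nlinarith
  have hprod : ∏ j ∈ Finset.univ.erase ⟨i, hi⟩, ((s i - g j) * (s (i+1) - g j)) > 0 := by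
    apply Finset.prod_pos
    intro j hj
    have hji : (j : ℕ) ≠ i := by
      intro h
      exact (Finset.mem_erase.mp hj).1 (Fin.ext h)
    rcases Nat.lt_or_ge (j : ℕ) i with h | h
    · have h1 := (key i (le_of_lt hi) j).1 h
      have h2 := (key (i+1) hi j).1 (by omega)
      nlinarith
    · have h1 := (key i (le_of_lt hi) j).2 (by omega)
      have h2 := (key (i+1) hi j).2 (by omega)
      nlinarith
  have hfull : ∏ j : Fin d, ((s i - g j) * (s (i+1) - g j)) < 0 := by
    rw [← Finset.mul_prod_erase Finset.univ _ (Finset.mem_univ ⟨i, hi⟩)]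
    exact mul_neg_of_neg_of_pos hterm hprod
  have : P.leadingCoeff^2 > 0 := by positivity
  nlinarith


lemma eval_smul_homog {n d : ℕ} {q : MvPolynomial (Fin (n+1)) ℝ} (hq : q.IsHomogeneous d)
    (c : ℝ) (x : Fin (n+1) → ℝ) :
    MvPolynomial.eval (c • x) q = c ^ d * MvPolynomial.eval x q := by
  rw [MvPolynomial.eval_eq', MvPolynomial.eval_eq', Finset.mul_sum]
  apply Finset.sum_congr rfl
  intro m hm
  rw [MvPolynomial.mem_support_iff] at hm
  have : ∏ i, (c • x) i ^ m i = c ^ d * ∏ i, x i ^ m i := by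
    calc ∏ i, (c • x) i ^ m i = ∏ i, (c ^ m i * x i ^ m i) := by
          apply Finset.prod_congr rfl; intro i _; rw [Pi.smul_apply, smul_eq_mul, mul_pow]
      _ = (∏ i, c ^ m i) * ∏ i, x i ^ m i := Finset.prod_mul_distrib
      _ = c ^ d * ∏ i, x i ^ m i := by
          rw [Finset.prod_pow_eq_pow_sum, degree_of_mem_support hq hm]
  rw [this]; ring


lemma univRestrict_smul_roots {n d : ℕ} (hd : 1 ≤ d) {q : MvPolynomial (Fin (n+1)) ℝ}
    (hq : q.IsHomogeneous d) {c : ℝ} (hc : 0 < c) (v : Fin n → ℝ)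
    (h1 : Multiset.card (univRestrict n q v).roots = d)
    (h2 : (univRestrict n q v).roots.Nodup) :
    Multiset.card (univRestrict n q (c • v)).roots = d ∧
      (univRestrict n q (c • v)).roots.Nodup := by
  have hc0 : c ≠ 0 := ne_of_gt hc
  set Q := univRestrict n q v with hQdef
  have hQ : Q ≠ 0 := by
    intro h
    rw [h] at h1
    simp at h1
    omega
  have hdeg : Q.natDegree = d := by
    have ha : Q.natDegree ≤ d := natDegree_univRestrict_le hq v
    have hb := h1 ▸ Polynomial.card_roots' Q
    omega
  have hsplits : Q.Splits := Polynomial.splits_iff_card_roots.mpr (by omega)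
  have hfact := hsplits.eq_prod_roots
  set lc := Q.leadingCoeff with hlc
  have hlc0 : lc ≠ 0 := Polynomial.leadingCoeff_ne_zero.mpr hQ
  have key : univRestrict n q (c • v)
      = Polynomial.C lc * ((Q.roots.map (fun a => c * a)).map (fun a => Polynomial.X - Polynomial.C a)).prod := by
    apply Polynomial.funext
    intro s
    rw [eval_univRestrict]
    have hpt : (Fin.cases s (c • v) : Fin (n+1) → ℝ) = c • (Fin.cases (c⁻¹ * s) v) := by
      funext i
      induction i using Fin.cases with
      | zero =>
          simp only [Fin.cases_zero, Pi.smul_apply, smul_eq_mul]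
          field_simp
      | succ j => simp
    rw [hpt, eval_smul_homog hq, ← eval_univRestrict, ← hQdef]
    conv_lhs => rw [hfact]
    rw [Polynomial.eval_mul, Polynomial.eval_C, Polynomial.eval_multiset_prod,
      Polynomial.eval_mul, Polynomial.eval_C, Polynomial.eval_multiset_prod,
      Multiset.map_map, Multiset.map_map, Multiset.map_map]
    simp only [Function.comp_def, Polynomial.eval_sub, Polynomial.eval_X, Polynomial.eval_C]
    have : c ^ d * (lc * (Multiset.map (fun a : ℝ => c⁻¹ * s - a) Q.roots).prod)
        = lc * ((Multiset.map (fun a : ℝ => c * (c⁻¹ * s - a)) Q.roots).prod) := by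
      have hmul : (Multiset.map (fun a : ℝ => c * (c⁻¹ * s - a)) Q.roots).prod
          = (Multiset.map (fun _ : ℝ => c) Q.roots).prod * (Multiset.map (fun a : ℝ => c⁻¹ * s - a) Q.roots).prod :=
        Multiset.prod_map_mul
      rw [hmul]
      have : (Multiset.map (fun _ : ℝ => c) Q.roots).prod = c ^ d := by
        rw [Multiset.map_const', Multiset.prod_replicate, h1]
      rw [this]; ring
    rw [this]
    congr 1
    congr 1
    apply Multiset.map_congr rfl
    intro a _
    field_simp
  rw [key, Polynomial.roots_C_mul _ hlc0, Polynomial.roots_multiset_prod_X_sub_C]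
  constructor
  · rw [Multiset.card_map, h1]
  · exact Multiset.Nodup.map (mul_right_injective₀ hc0) h2


lemma mul_neg_of_close {a₁ a₂ b₁ b₂ : ℝ} (h1 : |a₁ - b₁| < |b₁|) (h2 : |a₂ - b₂| < |b₂|)
    (h : b₁ * b₂ < 0) : a₁ * a₂ < 0 := by
  rcases mul_neg_iff.mp h with ⟨hb1, hb2⟩ | ⟨hb1, hb2⟩
  · have e1 := abs_lt.mp h1
    have e2 := abs_lt.mp h2
    rw [abs_of_pos hb1] at e1
    rw [abs_of_neg hb2] at e2
    apply mul_neg_of_pos_of_neg <;> [linarith [e1.1]; linarith [e2.2]]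
  · have e1 := abs_lt.mp h1
    have e2 := abs_lt.mp h2
    rw [abs_of_neg hb1] at e1
    rw [abs_of_pos hb2] at e2
    apply mul_neg_of_neg_of_pos <;> [linarith [e1.2]; linarith [e2.1]]


lemma local_good (n d : ℕ) (hd : 1 ≤ d)
    (p : MvPolynomial (Fin (n + 1)) ℝ) (hhom : p.IsHomogeneous d)
    (hstrict : ∀ u : Fin n → ℝ, u ≠ 0 →
      Multiset.card (univRestrict n p u).roots = d ∧ (univRestrict n p u).roots.Nodup)
    (u : Fin n → ℝ) (hu : ‖u‖ = 1) :
    ∃ ε ρ : ℝ, 0 < ε ∧ 0 < ρ ∧ ∀ q : MvPolynomial (Fin (n + 1)) ℝ, q.IsHomogeneous d →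
      (∀ m : Fin (n + 1) →₀ ℕ, |q.coeff m - p.coeff m| ≤ ε) →
      ∀ v : Fin n → ℝ, ‖v‖ = 1 → dist v u < ρ →
      Multiset.card (univRestrict n q v).roots = d ∧ (univRestrict n q v).roots.Nodup := by
  have hu0 : u ≠ 0 := by intro h; rw [h, norm_zero] at hu; norm_num at hu
  obtain ⟨hcard, hnodup⟩ := hstrict u hu0
  set P := univRestrict n p u with hP
  have hdeg : P.natDegree ≤ d := natDegree_univRestrict_le hhom u
  obtain ⟨s, hmono, hsign⟩ := exists_sample_points hd hdeg hcard hnodup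
  have hne : ∀ i ≤ d, P.eval (s i) ≠ 0 := by
    intro i hi
    rcases Nat.lt_or_ge i d with h | h
    · intro h0
      have := hsign i h
      rw [h0] at this; simp at this
    · have hieq : i = d := by omega
      intro h0
      have hd1 : d - 1 < d := by omega
      have := hsign (d-1) hd1
      have : P.eval (s (d-1)) * P.eval (s (d-1+1)) < 0 := this
      have heq : d - 1 + 1 = i := by omega
      rw [heq, h0] at this; simp at this
  -- δ
  have hrne : (Finset.range (d+1)).Nonempty := ⟨0, by simp⟩
  set δ : ℝ := (Finset.range (d+1)).inf' hrne (fun i => |P.eval (s i)|) with hδ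
  have hδpos : 0 < δ := by
    rw [hδ, Finset.lt_inf'_iff]
    intro i hi
    rw [Finset.mem_range] at hi
    exact abs_pos.mpr (hne i (by omega))
  have hδle : ∀ i ≤ d, δ ≤ |P.eval (s i)| := by
    intro i hi
    exact Finset.inf'_le _ (Finset.mem_range.mpr (by omega))
  -- R
  set R : ℝ := 2 + (Finset.range (d+1)).sup' hrne (fun i => |s i|) with hR
  have hsupnn : 0 ≤ (Finset.range (d+1)).sup' hrne (fun i => |s i|) := by
    have h0 : (0:ℕ) ∈ Finset.range (d+1) := by simp
    exact le_trans (abs_nonneg (s 0)) (Finset.le_sup' (fun i => |s i|) h0)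
  have hR1 : 1 ≤ R := by rw [hR]; linarith
  have hRs : ∀ i ≤ d, |s i| ≤ R := by
    intro i hi
    have hmem : i ∈ Finset.range (d+1) := Finset.mem_range.mpr (by omega)
    have := Finset.le_sup' (fun i => |s i|) hmem
    rw [hR]; linarith
  -- ε
  set N : ℝ := ((bigM n d).card : ℝ) with hN
  have hNnn : 0 ≤ N := Nat.cast_nonneg _
  have hRd : 0 < R ^ d := by positivity
  set ε : ℝ := δ / (2 * (N * R ^ d + 1)) with hε
  have hεpos : 0 < ε := by
    rw [hε]; positivity
  -- continuity
  have hcont : ∀ i : ℕ, ∃ ρ > 0, ∀ v : Fin n → ℝ, dist v u < ρ →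
      |MvPolynomial.eval (Fin.cases (s i) v) p - MvPolynomial.eval (Fin.cases (s i) u) p| < δ/2 := by
    intro i
    have hc1 : Continuous (fun v : Fin n → ℝ => (Fin.cases (s i) v : Fin (n+1) → ℝ)) := by
      apply continuous_pi
      intro j
      induction j using Fin.cases with
      | zero => simpa using continuous_const
      | succ k => simpa using continuous_apply k
    have hc2 : Continuous (fun v : Fin n → ℝ => MvPolynomial.eval (Fin.cases (s i) v) p) :=
      (MvPolynomial.continuous_eval p).comp hc1
    have := Metric.continuousAt_iff.mp (hc2.continuousAt (x := u)) (δ/2) (by linarith)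
    obtain ⟨ρ, hρ0, hρ⟩ := this
    refine ⟨ρ, hρ0, fun v hv => ?_⟩
    have := hρ hv
    rwa [Real.dist_eq] at this
  choose ρf hρf0 hρf using hcont
  set ρ : ℝ := (Finset.range (d+1)).inf' hrne ρf with hρdef
  have hρpos : 0 < ρ := by
    rw [hρdef, Finset.lt_inf'_iff]
    intro i _
    exact hρf0 i
  refine ⟨ε, ρ, hεpos, hρpos, ?_⟩
  intro q hq hqc v hv hvu
  set Q := univRestrict n q v with hQ
  have hQdeg : Q.natDegree ≤ d := natDegree_univRestrict_le hq v
  -- closeness of evaluations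
  have hclose : ∀ i ≤ d, |Q.eval (s i) - P.eval (s i)| < δ := by
    intro i hi
    have e1 : Q.eval (s i) = MvPolynomial.eval (Fin.cases (s i) v) q := eval_univRestrict n q v (s i)
    have e2 : P.eval (s i) = MvPolynomial.eval (Fin.cases (s i) u) p := eval_univRestrict n p u (s i)
    have t1 : |MvPolynomial.eval (Fin.cases (s i) v) q - MvPolynomial.eval (Fin.cases (s i) v) p| ≤ N * ε * R ^ d := by
      have hsub : (q - p).IsHomogeneous d := hq.sub hhom
      have hcoeff : ∀ m, |(q - p).coeff m| ≤ ε := by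
        intro m
        rw [MvPolynomial.coeff_sub]
        exact hqc m
      have hx : ∀ j : Fin (n+1), |(Fin.cases (s i) v : Fin (n+1) → ℝ) j| ≤ R := by
        intro j
        induction j using Fin.cases with
        | zero => simpa using hRs i hi
        | succ k =>
            simp only [Fin.cases_succ]
            calc |v k| ≤ ‖v‖ := norm_le_pi_norm v k
              _ = 1 := hv
              _ ≤ R := hR1
      have := eval_bound hsub hcoeff hR1 hx
      rwa [map_sub] at this
    have t1' : N * ε * R ^ d < δ/2 := by
      have hkey : N * ε * R ^ d = δ * (N * R ^ d) / (2 * (N * R ^ d + 1)) := by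
        rw [hε]; ring
      rw [hkey]
      rw [div_lt_iff₀ (by positivity)]
      have h1 : N * R ^ d < N * R ^ d + 1 := by linarith
      nlinarith [mul_pos hδpos (show (0:ℝ) < 1 by norm_num)]
    have t2 : |MvPolynomial.eval (Fin.cases (s i) v) p - MvPolynomial.eval (Fin.cases (s i) u) p| < δ/2 := by
      apply hρf i
      calc dist v u < ρ := hvu
        _ ≤ ρf i := Finset.inf'_le _ (Finset.mem_range.mpr (by omega))

    calc |Q.eval (s i) - P.eval (s i)|
        ≤ |MvPolynomial.eval (Fin.cases (s i) v) q - MvPolynomial.eval (Fin.cases (s i) v) p|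
          + |MvPolynomial.eval (Fin.cases (s i) v) p - MvPolynomial.eval (Fin.cases (s i) u) p| := by
          rw [e1, e2]
          exact abs_sub_le _ _ _
      _ < δ/2 + δ/2 := by exact add_lt_add (lt_of_le_of_lt t1 t1') t2
      _ = δ := by ring
  have hQsign : ∀ i < d, Q.eval (s i) * Q.eval (s (i+1)) < 0 := by
    intro i hi
    apply mul_neg_of_close (b₁ := P.eval (s i)) (b₂ := P.eval (s (i+1)))
    · exact lt_of_lt_of_le (hclose i (by omega)) (hδle i (by omega))
    · exact lt_of_lt_of_le (hclose (i+1) (by omega)) (hδle (i+1) (by omega))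
    · exact hsign i hi
  exact roots_of_sign_changes hd hQdeg hmono hQsign

theorem strictlyHyperbolic_open (n d : ℕ) (hn : 1 ≤ n) (hd : 1 ≤ d)
    (p : MvPolynomial (Fin (n + 1)) ℝ) (hhom : p.IsHomogeneous d)
    (hmonic : MvPolynomial.eval (fun i : Fin (n + 1) => if i = 0 then (1 : ℝ) else 0) p = 1)
    (hstrict : StrictlyHyperbolic n d p) :
    ∃ ε > (0 : ℝ), ∀ q : MvPolynomial (Fin (n + 1)) ℝ,
      q.IsHomogeneous d →
      MvPolynomial.eval (fun i : Fin (n + 1) => if i = 0 then (1 : ℝ) else 0) q = 1 →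
      (∀ m : Fin (n + 1) →₀ ℕ, |q.coeff m - p.coeff m| < ε) →
      StrictlyHyperbolic n d q := by
  classical
  set K : Set (Fin n → ℝ) := Metric.sphere 0 1 with hK
  have hKc : IsCompact K := isCompact_sphere 0 1
  have hloc := local_good n d hd p hhom hstrict
  choose! εf ρf hεf hρf hgood using hloc
  have hcover : K ⊆ ⋃ u : K, Metric.ball (u : Fin n → ℝ) (ρf u) := by
    intro v hv
    have hv1 : ‖v‖ = 1 := by rwa [hK, mem_sphere_zero_iff_norm] at hv
    exact Set.mem_iUnion.mpr ⟨⟨v, hv⟩, Metric.mem_ball_self (hρf v hv1)⟩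
  obtain ⟨t, ht⟩ := hKc.elim_finite_subcover
    (fun u : K => Metric.ball (u : Fin n → ℝ) (ρf u)) (fun u => Metric.isOpen_ball) hcover
  have hv0 : (Pi.single (⟨0, hn⟩ : Fin n) (1:ℝ)) ∈ K := by
    rw [hK, mem_sphere_zero_iff_norm, Pi.norm_single]
    exact norm_one
  have htne : t.Nonempty := by
    rcases Set.mem_iUnion₂.mp (ht hv0) with ⟨u, hu, _⟩
    exact ⟨u, hu⟩
  set ε : ℝ := t.inf' htne (fun u => εf u) with hε
  have hεpos : 0 < ε := by
    rw [hε, Finset.lt_inf'_iff]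
    intro u _
    exact hεf u (mem_sphere_zero_iff_norm.mp u.2)
  refine ⟨ε, hεpos, ?_⟩
  intro q hq hqm hqc
  intro w hw
  have hc : 0 < ‖w‖ := norm_pos_iff.mpr hw
  set v : Fin n → ℝ := ‖w‖⁻¹ • w with hv
  have hv1 : ‖v‖ = 1 := by
    rw [hv, norm_smul, norm_inv, norm_norm]
    field_simp
  have hvK : v ∈ K := by rw [hK, mem_sphere_zero_iff_norm]; exact hv1
  rcases Set.mem_iUnion₂.mp (ht hvK) with ⟨u, hut, hvball⟩
  have hu1 : ‖(u : Fin n → ℝ)‖ = 1 := mem_sphere_zero_iff_norm.mp u.2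
  have hεle : ε ≤ εf u := Finset.inf'_le _ hut
  have hqc' : ∀ m, |q.coeff m - p.coeff m| ≤ εf u :=
    fun m => le_of_lt (lt_of_lt_of_le (hqc m) hεle)
  have hroots := hgood u hu1 q hq hqc' v hv1 (by rwa [Metric.mem_ball] at hvball)
  have hres := univRestrict_smul_roots hd hq hc v hroots.1 hroots.2
  have hwv : ‖w‖ • v = w := by
    rw [hv, smul_smul]
    rw [mul_inv_cancel₀ hc.ne', one_smul]
  rwa [hwv] at hres
end
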